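/- arXiv:2506.12693 — 7 statements merged into one kernel-verified Lean document; each statement's English description precedes it below -/
import Mathlib

section
/- Let n and R be positive integers, σ_z > 0, δ ≥ 0, and η ∈ (0,1). Let C ⊂ ℝ^n be a finite codebook with |C| ≤ 2^R, and let x ∈ ℝ^n be such that some c* ∈ C satisfies (1/n)‖x − c*‖₂² ≤ δ. Let z ∈ ℝ^n be a random vector whose coordinates are independent Gaussian random variables with mean 0 and variance σ_z², let y = x + z, and let x̂ be any element of argmin_{c ∈ C} ‖y − c‖₂². Then with probability at least 1 − 2^{−ηR+2}, one has (1/√n)‖x − x̂‖₂ ≤ √δ + 2 σ_z √((2 ln 2) R / n) · (1 + 2√η). -/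
open MeasureTheory ProbabilityTheory

open Real
open scoped NNReal ENNReal


lemma gpdf_mul_exp {v : ℝ≥0} (hv : v ≠ 0) (s x : ℝ) :
    gaussianPDFReal 0 v x * rexp (s * x)
      = rexp (v * s ^ 2 / 2) * gaussianPDFReal (v * s) v x := by
  have hv' : (v : ℝ) ≠ 0 := by exact_mod_cast hv
  rw [gaussianPDFReal, gaussianPDFReal, mul_assoc, ← Real.exp_add,
    mul_comm (rexp (↑v * s ^ 2 / 2)), mul_assoc _ _ (rexp (↑v * s ^ 2 / 2)), ← Real.exp_add]
  congr 1
  field_simp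
  ring

lemma gpdf_fun (v : ℝ≥0) : (gaussianPDF 0 v)
    = fun x => (((gaussianPDFReal 0 v x).toNNReal : ℝ≥0) : ℝ≥0∞) := by
  ext x; rfl

lemma gpdf_smul {v : ℝ≥0} (hv : v ≠ 0) (s : ℝ) :
    (fun x => (gaussianPDFReal 0 v x).toNNReal • rexp (s * x))
      = fun x => rexp (v * s ^ 2 / 2) * gaussianPDFReal (v * s) v x := by
  ext x
  rw [NNReal.smul_def, smul_eq_mul, Real.coe_toNNReal _ (gaussianPDFReal_nonneg 0 v x)]
  exact gpdf_mul_exp hv s x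

lemma integrable_exp_gaussianReal {v : ℝ≥0} (hv : v ≠ 0) (s : ℝ) :
    Integrable (fun x => rexp (s * x)) (gaussianReal 0 v) := by
  rw [gaussianReal_of_var_ne_zero _ hv, gpdf_fun v,
    integrable_withDensity_iff_integrable_smul ((measurable_gaussianPDFReal 0 v).real_toNNReal)]
  rw [gpdf_smul hv s]
  exact (integrable_gaussianPDFReal _ _).const_mul _

lemma integral_exp_gaussianReal {v : ℝ≥0} (hv : v ≠ 0) (s : ℝ) :
    ∫ x, rexp (s * x) ∂(gaussianReal 0 v) = rexp (v * s ^ 2 / 2) := by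
  rw [gaussianReal_of_var_ne_zero _ hv, gpdf_fun v,
    integral_withDensity_eq_integral_smul ((measurable_gaussianPDFReal 0 v).real_toNNReal),
    gpdf_smul hv s, integral_const_mul, integral_gaussianPDFReal_eq_one _ hv, mul_one]

lemma chernoff_lin (n : ℕ) {Ω : Type*} [MeasurableSpace Ω] (P : Measure Ω)
    [IsProbabilityMeasure P] (σz : ℝ) (hσ : 0 < σz)
    (z : Ω → EuclideanSpace ℝ (Fin n))
    (hzmeas : ∀ i, Measurable fun ω => z ω i)
    (hzlaw : ∀ i, P.map (fun ω => z ω i) = gaussianReal 0 (Real.toNNReal (σz ^ 2)))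
    (hzindep : iIndepFun (fun i ω => z ω i) P)
    (w : EuclideanSpace ℝ (Fin n)) (t0 : ℝ) (ht0 : 0 ≤ t0) :
    P {ω | σz * t0 * ‖w‖ < ∑ i, w i * z ω i} ≤ ENNReal.ofReal (rexp (-t0 ^ 2 / 2)) := by
  set v : ℝ≥0 := Real.toNNReal (σz ^ 2) with hvdef
  have hvne : v ≠ 0 := by
    simp [hvdef, Real.toNNReal_eq_zero, not_le]
    positivity
  have hvval : (v : ℝ) = σz ^ 2 := Real.coe_toNNReal _ (by positivity)
  -- basic integral facts per coordinate
  have hint : ∀ (c : ℝ) (i : Fin n), Integrable (fun ω => rexp (c * z ω i)) P := by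
    intro c i
    have := (integrable_exp_gaussianReal hvne c)
    rw [← hzlaw i] at this
    exact (integrable_map_measure
      (Continuous.aestronglyMeasurable (by continuity)) (hzmeas i).aemeasurable).mp this
  have hval : ∀ (c : ℝ) (i : Fin n),
      ∫ ω, rexp (c * z ω i) ∂P = rexp (v * c ^ 2 / 2) := by
    intro c i
    rw [← integral_exp_gaussianReal hvne c, ← hzlaw i,
      integral_map (hzmeas i).aemeasurable (Continuous.aestronglyMeasurable (by continuity))]
  rcases eq_or_ne w 0 with hw | hw
  · simp [hw]
  -- nondegenerate case
  have hwn : 0 < ‖w‖ := norm_pos_iff.mpr hw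
  set s : ℝ := t0 / (σz * ‖w‖) with hsdef
  have hs0 : 0 ≤ s := by positivity
  set Y : Fin n → Ω → ℝ := fun i ω => (w i) * z ω i with hYdef
  have hYmeas : ∀ i, Measurable (Y i) := fun i => (hzmeas i).const_mul _
  have hYindep : iIndepFun Y P := by
    have := hzindep.comp (fun i (x : ℝ) => (w i) * x) (fun i => measurable_const_mul _)
    exact this
  have hYint : ∀ i ∈ Finset.univ, Integrable (fun ω => rexp (s * Y i ω)) P := by
    intro i _
    have : (fun ω => rexp (s * Y i ω)) = fun ω => rexp ((s * w i) * z ω i) := by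
      ext ω; rw [hYdef]; ring_nf
    rw [this]; exact hint _ i
  have hXeq : (fun ω => ∑ i, (w i) * z ω i) = (∑ i, Y i) := by
    ext ω; simp [hYdef, Finset.sum_apply]
  -- mgf of the sum
  have hmgf : mgf (∑ i, Y i) P s = rexp (v * s ^ 2 * ‖w‖ ^ 2 / 2) := by
    rw [iIndepFun.mgf_sum hYindep hYmeas]
    have heach : ∀ i, mgf (Y i) P s = rexp (v * (s * w i) ^ 2 / 2) := by
      intro i
      rw [mgf]
      have : (fun ω => rexp (s * Y i ω)) = fun ω => rexp ((s * w i) * z ω i) := by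
        ext ω; rw [hYdef]; ring_nf
      rw [this, hval]
    simp_rw [heach]
    rw [← Real.exp_sum]
    congr 1
    have hnw : ‖w‖ ^ 2 = ∑ i, (w i) ^ 2 := by
      rw [EuclideanSpace.norm_eq, Real.sq_sqrt (Finset.sum_nonneg fun i _ => sq_nonneg _)]
      simp [Real.norm_eq_abs, sq_abs]
    rw [hnw, Finset.mul_sum, Finset.sum_div]
    congr 1; ext i; ring
  -- Chernoff
  have hcher := measure_ge_le_exp_mul_mgf (μ := P) (X := ∑ i, Y i)
    (σz * t0 * ‖w‖) hs0 (iIndepFun.integrable_exp_mul_sum hYindep hYmeas hYint)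
  rw [hmgf, ← Real.exp_add] at hcher
  have hexp : -s * (σz * t0 * ‖w‖) + ↑v * s ^ 2 * ‖w‖ ^ 2 / 2 = -t0 ^ 2 / 2 := by
    rw [hvval, hsdef]
    field_simp
    ring
  rw [hexp] at hcher
  calc P {ω | σz * t0 * ‖w‖ < ∑ i, w i * z ω i}
      ≤ P {ω | σz * t0 * ‖w‖ ≤ (∑ i, Y i) ω} := by
        apply measure_mono
        intro ω hω
        simp only [Set.mem_setOf_eq] at hω ⊢
        rw [← hXeq]
        exact le_of_lt hω
    _ ≤ ENNReal.ofReal (rexp (-t0 ^ 2 / 2)) := by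
        rw [ENNReal.le_ofReal_iff_toReal_le (measure_ne_top P _) (Real.exp_nonneg _)]
        exact hcher

/-- Compression-based ML denoising under AWGN: high-probability error bound
in terms of the rate `R` and distortion `δ` of the codebook. -/
theorem stmt0
    (n R : ℕ) (hn : 0 < n) (hR : 0 < R)
    (σz : ℝ) (hσ : 0 < σz) (δ : ℝ) (hδ : 0 ≤ δ)
    (η : ℝ) (hη0 : 0 < η) (hη1 : η < 1)
    (C : Finset (EuclideanSpace ℝ (Fin n)))
    (hCcard : (C.card : ℝ) ≤ 2 ^ R)
    (x : EuclideanSpace ℝ (Fin n))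
    (hdist : ∃ c ∈ C, (1 / n : ℝ) * ‖x - c‖ ^ 2 ≤ δ)
    {Ω : Type*} [MeasurableSpace Ω] (P : Measure Ω) [IsProbabilityMeasure P]
    (z : Ω → EuclideanSpace ℝ (Fin n))
    (hzmeas : ∀ i, Measurable fun ω => z ω i)
    (hzlaw : ∀ i, P.map (fun ω => z ω i) = gaussianReal 0 (Real.toNNReal (σz ^ 2)))
    (hzindep : iIndepFun (fun i ω => z ω i) P)
    (xhat : Ω → EuclideanSpace ℝ (Fin n))
    (hxhat_mem : ∀ ω, xhat ω ∈ C)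
    (hxhat_min : ∀ ω, ∀ c ∈ C, ‖(x + z ω) - xhat ω‖ ≤ ‖(x + z ω) - c‖) :
    ENNReal.ofReal (1 - (2 : ℝ) ^ (-(η * R) + 2)) ≤
      P {ω | (1 / Real.sqrt n) * ‖x - xhat ω‖ ≤
        Real.sqrt δ + 2 * σz * Real.sqrt (2 * Real.log 2 * R / n) * (1 + 2 * Real.sqrt η)} := by
  obtain ⟨cstar, hcC, hcd⟩ := hdist
  have hlog2 : (0:ℝ) ≤ Real.log 2 := Real.log_nonneg one_le_two
  have hnR : (0:ℝ) < n := by exact_mod_cast hn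
  set t0 : ℝ := Real.sqrt (2 * Real.log 2 * ((1 + η) * R)) with ht0def
  have ht0 : 0 ≤ t0 := Real.sqrt_nonneg _
  set G : Set Ω :=
    {ω | ∀ c ∈ C, ∑ i, (c - cstar) i * z ω i ≤ σz * t0 * ‖c - cstar‖} with hGdef
  -- measurability of G
  have hGmeas : MeasurableSet G := by
    have : G = ⋂ c ∈ C,
        {ω | ∑ i, (c - cstar) i * z ω i ≤ σz * t0 * ‖c - cstar‖} := by
      ext ω; simp [hGdef]
    rw [this]
    exact MeasurableSet.biInter C.finite_toSet.countable fun c _ =>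
      measurableSet_le (Finset.measurable_sum _ fun i _ => (hzmeas i).const_mul _)
        measurable_const
  -- deterministic part: G is contained in the good event
  have hGsub : G ⊆ {ω | (1 / Real.sqrt n) * ‖x - xhat ω‖ ≤
      Real.sqrt δ + 2 * σz * Real.sqrt (2 * Real.log 2 * R / n) * (1 + 2 * Real.sqrt η)} := by
    intro ω hω
    simp only [Set.mem_setOf_eq] at hω ⊢
    set q : ℝ := Real.sqrt (2 * Real.log 2 * R / n) with hqdef
    have hsn : 0 < Real.sqrt n := Real.sqrt_pos.mpr hnR
    -- key norm inequality
    have hkey : ‖x - xhat ω‖ ≤ ‖x - cstar‖ + 2 * (σz * t0) := by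
      have h1 : ‖(x - xhat ω) + z ω‖ ≤ ‖(x - cstar) + z ω‖ := by
        have e1 : (x + z ω) - xhat ω = (x - xhat ω) + z ω := by abel
        have e2 : (x + z ω) - cstar = (x - cstar) + z ω := by abel
        have := hxhat_min ω cstar hcC
        rwa [e1, e2] at this
      have h2 := pow_le_pow_left₀ (norm_nonneg _) h1 2
      rw [norm_add_sq_real, norm_add_sq_real] at h2
      have h3 : (inner ℝ (x - cstar) (z ω) : ℝ) - inner ℝ (x - xhat ω) (z ω)
          = ∑ i, (xhat ω - cstar) i * z ω i := by
        rw [← inner_sub_left]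
        have e3 : (x - cstar) - (x - xhat ω) = xhat ω - cstar := by abel
        rw [e3, PiLp.inner_apply]
        simp [RCLike.inner_apply, mul_comm]
      have h4 := hω (xhat ω) (hxhat_mem ω)
      have h5 : ‖xhat ω - cstar‖ ≤ ‖x - xhat ω‖ + ‖x - cstar‖ := by
        have e4 : xhat ω - cstar = (x - cstar) - (x - xhat ω) := by abel
        rw [e4]
        exact (norm_sub_le _ _).trans (by rw [add_comm])
      have hb : 0 ≤ σz * t0 := by positivity
      have h6 : σz * t0 * ‖xhat ω - cstar‖
          ≤ σz * t0 * (‖x - xhat ω‖ + ‖x - cstar‖) := by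
        exact mul_le_mul_of_nonneg_left h5 hb
      nlinarith [norm_nonneg (x - xhat ω), norm_nonneg (x - cstar),
        sq_nonneg (‖x - xhat ω‖ - ‖x - cstar‖ - 2 * (σz * t0))]
    -- bounds on the two terms
    have hA : ‖x - cstar‖ ≤ Real.sqrt n * Real.sqrt δ := by
      rw [← Real.sqrt_mul (le_of_lt hnR)]
      have h7 : ‖x - cstar‖ ^ 2 ≤ (n:ℝ) * δ := by
        have := hcd
        rw [div_mul_eq_mul_div, one_mul, div_le_iff₀ hnR] at this
        linarith
      nlinarith [Real.sq_sqrt (show (0:ℝ) ≤ (n:ℝ) * δ by positivity),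
        Real.sqrt_nonneg ((n:ℝ) * δ), norm_nonneg (x - cstar)]
    have hB : t0 ≤ Real.sqrt n * (q * (1 + 2 * Real.sqrt η)) := by
      have h2l : (0:ℝ) ≤ 2 * Real.log 2 * R := by positivity
      have hsq : Real.sqrt n * q = Real.sqrt (2 * Real.log 2 * R) := by
        rw [hqdef, ← Real.sqrt_mul (le_of_lt hnR)]
        congr 1
        field_simp
      have hse : Real.sqrt (1 + η) ≤ 1 + 2 * Real.sqrt η := by
        have h8 : (1:ℝ) + η ≤ (1 + 2 * Real.sqrt η) ^ 2 := by
          nlinarith [Real.sq_sqrt hη0.le, Real.sqrt_nonneg η]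
        have := Real.sqrt_le_sqrt h8
        rwa [Real.sqrt_sq (by positivity)] at this
      have ht0' : t0 = Real.sqrt (2 * Real.log 2 * R) * Real.sqrt (1 + η) := by
        rw [ht0def, ← Real.sqrt_mul h2l]
        congr 1
        ring
      rw [← mul_assoc, hsq, ht0']
      exact mul_le_mul_of_nonneg_left hse (Real.sqrt_nonneg _)
    -- combine
    have hq0 : 0 ≤ q := Real.sqrt_nonneg _
    calc (1 / Real.sqrt n) * ‖x - xhat ω‖
        ≤ (1 / Real.sqrt n) * (Real.sqrt n * Real.sqrt δ
            + 2 * σz * (Real.sqrt n * (q * (1 + 2 * Real.sqrt η)))) := by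
          apply mul_le_mul_of_nonneg_left _ (by positivity)
          calc ‖x - xhat ω‖ ≤ ‖x - cstar‖ + 2 * (σz * t0) := hkey
            _ ≤ Real.sqrt n * Real.sqrt δ
                + 2 * σz * (Real.sqrt n * (q * (1 + 2 * Real.sqrt η))) := by
              have := mul_le_mul_of_nonneg_left hB (show (0:ℝ) ≤ 2 * σz by positivity)
              linarith
      _ = Real.sqrt δ + 2 * σz * q * (1 + 2 * Real.sqrt η) := by
          field_simp
  -- probabilistic part: union bound
  have hGc : P Gᶜ ≤ ENNReal.ofReal ((2:ℝ) ^ (-(η * (R:ℝ)))) := by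
    have hsubU : Gᶜ ⊆ ⋃ c ∈ C,
        {ω | σz * t0 * ‖c - cstar‖ < ∑ i, (c - cstar) i * z ω i} := by
      intro ω hω
      simp only [hGdef, Set.mem_compl_iff, Set.mem_setOf_eq, not_forall] at hω
      obtain ⟨c, hc, hlt⟩ := hω
      exact Set.mem_biUnion hc (by simpa using lt_of_not_ge hlt)
    have hhe : rexp (-t0 ^ 2 / 2) = (2:ℝ) ^ (-((1 + η) * (R:ℝ))) := by
      rw [Real.rpow_def_of_pos two_pos]
      congr 1
      rw [ht0def, Real.sq_sqrt (by positivity)]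
      ring
    calc P Gᶜ ≤ P (⋃ c ∈ C, {ω | σz * t0 * ‖c - cstar‖ < ∑ i, (c - cstar) i * z ω i}) :=
          measure_mono hsubU
      _ ≤ ∑ c ∈ C, P {ω | σz * t0 * ‖c - cstar‖ < ∑ i, (c - cstar) i * z ω i} :=
          measure_biUnion_finset_le C _
      _ ≤ ∑ _c ∈ C, ENNReal.ofReal (rexp (-t0 ^ 2 / 2)) :=
          Finset.sum_le_sum fun c _ =>
            chernoff_lin n P σz hσ z hzmeas hzlaw hzindep (c - cstar) t0 ht0
      _ = (C.card : ℝ≥0∞) * ENNReal.ofReal (rexp (-t0 ^ 2 / 2)) := by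
          rw [Finset.sum_const, nsmul_eq_mul]
      _ ≤ ENNReal.ofReal ((2:ℝ) ^ R) * ENNReal.ofReal (rexp (-t0 ^ 2 / 2)) := by
          apply mul_le_mul_left
          rw [show ((C.card : ℝ≥0∞)) = ENNReal.ofReal (C.card : ℝ) by
            simp [ENNReal.ofReal_natCast]]
          exact ENNReal.ofReal_le_ofReal hCcard
      _ = ENNReal.ofReal ((2:ℝ) ^ R * rexp (-t0 ^ 2 / 2)) := by
          rw [ENNReal.ofReal_mul (by positivity)]
      _ = ENNReal.ofReal ((2:ℝ) ^ (-(η * (R:ℝ)))) := by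
          congr 1
          rw [hhe, ← Real.rpow_natCast 2 R, ← Real.rpow_add two_pos]
          congr 1
          ring
  -- assemble
  have hr0 : (0:ℝ) ≤ (2:ℝ) ^ (-(η * (R:ℝ))) := le_of_lt (Real.rpow_pos_of_pos two_pos _)
  calc ENNReal.ofReal (1 - (2 : ℝ) ^ (-(η * R) + 2))
      ≤ ENNReal.ofReal (1 - (2:ℝ) ^ (-(η * (R:ℝ)))) := by
        apply ENNReal.ofReal_le_ofReal
        have := Real.rpow_le_rpow_of_exponent_le one_le_two
          (show -(η * (R:ℝ)) ≤ -(η * (R:ℝ)) + 2 by linarith)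
        linarith
    _ = 1 - ENNReal.ofReal ((2:ℝ) ^ (-(η * (R:ℝ)))) := by
        rw [ENNReal.ofReal_sub _ hr0, ENNReal.ofReal_one]
    _ ≤ 1 - P Gᶜ := tsub_le_tsub_left hGc 1
    _ = P G := by
        have h9 : P Gᶜ = 1 - P G := prob_compl_eq_one_sub hGmeas
        rw [h9, ENNReal.sub_sub_cancel ENNReal.one_ne_top prob_le_one]
    _ ≤ _ := measure_mono hGsub
end

section
/- Let n and R be positive integers, α > 0, δ ≥ 0, η ∈ (0,1), and 0 < x_max < 1. Let C ⊂ (0, x_max]^n be a finite codebook with |C| ≤ 2^R, and let x ∈ (0, x_max]^n be such that some c* ∈ C satisfies (1/n)‖x − c*‖₂² ≤ δ. Let y₁, …, y_n be independent random variables with y_i ∼ Poisson(α x_i), and let x̂ be any element of argmin_{c ∈ C} ‖c − y/α‖₂². Assume 4 (ln 2)(1+η) R ≤ 9 n x_max⁴ α. Then with probability at least 1 − 2^{−ηR+2}, one has (1/n)‖x − x̂‖₂² ≤ δ + C √(R/(n α)), where C = 4 √(ln 2) (√(1+η) + √η + 1). -/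
open MeasureTheory ProbabilityTheory
open scoped NNReal ENNReal


lemma stmt3aux_fact (k : ℕ) : 2 * 3 ^ k ≤ (k + 2).factorial := by
  induction k with
  | zero => simp [Nat.factorial]
  | succ m ih =>
    have h : (m + 3).factorial = (m + 3) * (m + 2).factorial := rfl
    calc 2 * 3 ^ (m + 1) = 3 * (2 * 3 ^ m) := by ring
    _ ≤ 3 * (m + 2).factorial := Nat.mul_le_mul_left _ ih
    _ ≤ (m + 3) * (m + 2).factorial := Nat.mul_le_mul_right _ (by omega)
    _ = (m + 3).factorial := h.symm

lemma stmt3aux_exp_series {s : ℝ} (h0 : 0 ≤ s) (h3 : s < 3) :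
    Real.exp s ≤ 1 + s + s ^ 2 / 2 * (1 - s / 3)⁻¹ := by
  have hsum : HasSum (fun k : ℕ => s ^ k / k.factorial) (Real.exp s) := by
    rw [Real.exp_eq_exp_ℝ]; exact NormedSpace.expSeries_div_hasSum_exp s
  have hsummable := hsum.summable
  have hsplit := Summable.sum_add_tsum_nat_add 2 hsummable
  have hrange : ∑ i ∈ Finset.range 2, s ^ i / (i.factorial : ℝ) = 1 + s := by
    simp [Finset.sum_range_succ, Nat.factorial]
  have hgeo : HasSum (fun k : ℕ => s ^ 2 / 2 * (s / 3) ^ k) (s ^ 2 / 2 * (1 - s / 3)⁻¹) := by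
    refine (hasSum_geometric_of_lt_one (by positivity) (by linarith)).mul_left _
  have hterm : ∀ k : ℕ, s ^ (k + 2) / ((k + 2).factorial : ℝ) ≤ s ^ 2 / 2 * (s / 3) ^ k := by
    intro k
    have h1 : (0:ℝ) < 2 * 3 ^ k := by positivity
    have h2 : (2 * 3 ^ k : ℝ) ≤ ((k + 2).factorial : ℝ) := by
      exact_mod_cast stmt3aux_fact k
    have h4 : s ^ (k + 2) / ((k + 2).factorial : ℝ) ≤ s ^ (k + 2) / (2 * 3 ^ k) :=
      div_le_div_of_nonneg_left (by positivity) h1 h2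
    refine h4.trans_eq ?_
    rw [div_pow, pow_add]
    ring
  have htail : ∑' k : ℕ, s ^ (k + 2) / ((k + 2).factorial : ℝ) ≤ s ^ 2 / 2 * (1 - s / 3)⁻¹ := by
    refine (Summable.tsum_le_tsum hterm ((summable_nat_add_iff 2).mpr hsummable) hgeo.summable).trans_eq
      hgeo.tsum_eq
  have := hsum.tsum_eq
  nlinarith [htail, hsplit, hrange, this]


lemma stmt3aux_expquad {q s : ℝ} (hq : 1 ≤ q) (hs : s ≤ 3 / (2 * q)) :
    Real.exp s ≤ 1 + s + q ^ 2 * s ^ 2 := by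
  have hq0 : 0 < q := by linarith
  have hq2 : 1 ≤ q ^ 2 := by nlinarith
  rcases le_or_gt s 0 with h | h
  · have h1 : -s + 1 ≤ Real.exp (-s) := Real.add_one_le_exp (-s)
    have h2 : Real.exp s * Real.exp (-s) = 1 := by rw [← Real.exp_add]; simp
    have h3 : (0:ℝ) < Real.exp s := Real.exp_pos s
    have h4 : Real.exp s * (1 - s) ≤ 1 := by nlinarith
    have h6 : Real.exp s ≤ 1 + s + s ^ 2 := by nlinarith
    nlinarith [mul_nonneg (sq_nonneg s) (by linarith : (0:ℝ) ≤ q ^ 2 - 1)]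
  · rw [le_div_iff₀ (by positivity)] at hs
    have hqs : q * s ≤ 3 / 2 := by nlinarith
    have hs32 : s ≤ 3 / 2 := by nlinarith
    have h3 : s < 3 := by linarith
    have hser := stmt3aux_exp_series h.le h3
    have h4 : (0:ℝ) < 1 - s / 3 := by linarith
    have h5 : s ^ 2 / 2 * (1 - s / 3)⁻¹ ≤ q ^ 2 * s ^ 2 := by
      rw [mul_inv_le_iff₀ h4]
      nlinarith [mul_nonneg (mul_nonneg (sub_nonneg.mpr hqs) hq0.le) (sq_nonneg s),
        mul_nonneg (sq_nonneg s) (by nlinarith : (0:ℝ) ≤ q ^ 2 - q / 2 - 1 / 2)]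
    linarith


lemma stmt3aux_poissonPMF_apply (r : ℝ≥0) (k : ℕ) :
    poissonPMF r k = ENNReal.ofReal (poissonPMFReal r k) := rfl

lemma stmt3aux_poisson_hasSum (r : ℝ≥0) (s : ℝ) :
    HasSum (fun k : ℕ => Real.exp (s * k) * poissonPMFReal r k)
      (Real.exp ((r : ℝ) * (Real.exp s - 1))) := by
  have h : HasSum (fun k : ℕ => ((r : ℝ) * Real.exp s) ^ k / k.factorial)
      (Real.exp ((r : ℝ) * Real.exp s)) := by
    rw [Real.exp_eq_exp_ℝ]; exact NormedSpace.expSeries_div_hasSum_exp _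
  have h2 := h.mul_left (Real.exp (-(r : ℝ)))
  have heq : (fun k : ℕ => Real.exp (-(r : ℝ)) * (((r : ℝ) * Real.exp s) ^ k / k.factorial))
      = fun k : ℕ => Real.exp (s * k) * poissonPMFReal r k := by
    funext k
    rw [poissonPMFReal, mul_pow, mul_comm s (k : ℝ), Real.exp_nat_mul]
    ring
  rw [heq] at h2
  have e : Real.exp (-(r:ℝ)) * Real.exp ((r:ℝ) * Real.exp s)
      = Real.exp ((r : ℝ) * (Real.exp s - 1)) := by
    rw [← Real.exp_add]
    ring_nf
  rw [e] at h2
  exact h2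

lemma stmt3aux_poisson_integrable (r : ℝ≥0) {f : ℕ → ℝ} (hf : ∀ k, 0 ≤ f k)
    (hsum : Summable (fun k => f k * poissonPMFReal r k)) :
    Integrable f (poissonMeasure r) := by
  refine ⟨measurable_from_nat.aestronglyMeasurable, ?_⟩
  rw [hasFiniteIntegral_iff_norm]
  have hμ : ∀ k : ℕ, (poissonMeasure r) {k} = ENNReal.ofReal (poissonPMFReal r k) := by
    intro k
    rw [poissonMeasure_singleton]
    rfl
  calc ∫⁻ k, ENNReal.ofReal ‖f k‖ ∂(poissonMeasure r)
      = ∑' k : ℕ, ENNReal.ofReal ‖f k‖ * (poissonMeasure r) {k} := lintegral_countable' _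
    _ = ∑' k : ℕ, ENNReal.ofReal (f k * poissonPMFReal r k) := by
        congr 1; funext k
        rw [hμ k, Real.norm_of_nonneg (hf k), ← ENNReal.ofReal_mul (hf k)]
    _ = ENNReal.ofReal (∑' k, f k * poissonPMFReal r k) := by
        rw [ENNReal.ofReal_tsum_of_nonneg
          (fun k => mul_nonneg (hf k) poissonPMFReal_nonneg) hsum]
    _ < ⊤ := ENNReal.ofReal_lt_top

lemma stmt3aux_poisson_exp_integrable (r : ℝ≥0) (s : ℝ) :
    Integrable (fun k : ℕ => Real.exp (s * k)) (poissonMeasure r) :=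
  stmt3aux_poisson_integrable r (fun k => (Real.exp_pos _).le)
    (stmt3aux_poisson_hasSum r s).summable

lemma stmt3aux_poisson_exp_integral (r : ℝ≥0) (s : ℝ) :
    ∫ k, Real.exp (s * k) ∂(poissonMeasure r) = Real.exp ((r : ℝ) * (Real.exp s - 1)) := by
  rw [integral_poissonMeasure' (stmt3aux_poisson_exp_integrable r s)]
  rw [← (stmt3aux_poisson_hasSum r s).tsum_eq]
  congr 1; funext k
  rw [smul_eq_mul, mul_comm]
  rfl


lemma stmt3aux_rv {Ω : Type*} [MeasurableSpace Ω] (P : Measure Ω)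
    {y : Ω → ℕ} (hy : Measurable y) {r : ℝ≥0} (hlaw : P.map y = poissonMeasure r)
    (u v : ℝ) :
    Integrable (fun ω => Real.exp (u * (y ω : ℝ) + v)) P ∧
    ∫ ω, Real.exp (u * (y ω : ℝ) + v) ∂P = Real.exp (v + (r : ℝ) * (Real.exp u - 1)) := by
  have h0 : AEStronglyMeasurable (fun k : ℕ => Real.exp (u * (k : ℝ))) (P.map y) :=
    measurable_from_nat.aestronglyMeasurable
  have hIm : Integrable (fun k : ℕ => Real.exp (u * (k : ℝ))) (P.map y) := by
    rw [hlaw]; exact stmt3aux_poisson_exp_integrable r u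
  have hint : Integrable (fun ω => Real.exp (u * (y ω : ℝ))) P :=
    (integrable_map_measure h0 hy.aemeasurable).mp hIm
  have hI : ∫ ω, Real.exp (u * (y ω : ℝ)) ∂P = Real.exp ((r : ℝ) * (Real.exp u - 1)) := by
    rw [← integral_map hy.aemeasurable h0, hlaw, stmt3aux_poisson_exp_integral]
  have hfe : (fun ω => Real.exp (u * (y ω : ℝ) + v))
      = fun ω => Real.exp v * Real.exp (u * (y ω : ℝ)) := by
    funext ω; rw [← Real.exp_add]; ring_nf
  constructor
  · rw [hfe]; exact hint.const_mul _
  · rw [hfe, integral_const_mul, hI, ← Real.exp_add]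


lemma stmt3aux_chernoff {Ω : Type*} [MeasurableSpace Ω] (P : Measure Ω)
    [IsProbabilityMeasure P] {n : ℕ} (y : Fin n → Ω → ℕ)
    (hymeas : ∀ i, Measurable (y i)) (r : Fin n → ℝ≥0)
    (hylaw : ∀ i, P.map (y i) = poissonMeasure (r i))
    (hyindep : iIndepFun y P)
    (c d : Fin n → ℝ) (t : ℝ) (ht : 0 ≤ t) (T B : ℝ)
    (hB : ∑ i, (t * d i + (r i : ℝ) * (Real.exp (t * c i) - 1)) ≤ B) :
    (P {ω | T ≤ ∑ i, (c i * (y i ω : ℝ) + d i)}).toReal ≤ Real.exp (-t * T + B) := by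
  set X : Fin n → Ω → ℝ := fun i ω => c i * (y i ω : ℝ) + d i with hX
  have hXmeas : ∀ i, Measurable (X i) := fun i =>
    (measurable_from_nat (f := fun k : ℕ => c i * (k : ℝ) + d i)).comp (hymeas i)
  have hXindep : iIndepFun X P :=
    hyindep.comp (fun i => fun k : ℕ => c i * (k : ℝ) + d i) (fun i => measurable_from_nat)
  have hfeq : ∀ i, (fun ω => Real.exp (t * X i ω))
      = fun ω => Real.exp ((t * c i) * (y i ω : ℝ) + t * d i) := by
    intro i; funext ω; rw [hX]; ring_nf
  have hint : ∀ i, Integrable (fun ω => Real.exp (t * X i ω)) P := by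
    intro i; rw [hfeq i]; exact (stmt3aux_rv P (hymeas i) (hylaw i) _ _).1
  have hmgf : ∀ i, mgf (X i) P t = Real.exp (t * d i + (r i : ℝ) * (Real.exp (t * c i) - 1)) := by
    intro i
    unfold mgf
    rw [hfeq i]
    exact (stmt3aux_rv P (hymeas i) (hylaw i) _ _).2
  have hintsum : Integrable (fun ω => Real.exp (t * (∑ i, X i) ω)) P :=
    hXindep.integrable_exp_mul_sum hXmeas (fun i _ => hint i)
  have hchern := measure_ge_le_exp_mul_mgf (μ := P) (X := ∑ i, X i) T ht hintsum
  have hset : {ω | T ≤ ∑ i, (c i * (y i ω : ℝ) + d i)} = {ω | T ≤ (∑ i, X i) ω} := by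
    ext ω; simp [hX, Finset.sum_apply]
  have hmgfsum : mgf (∑ i, X i) P t ≤ Real.exp B := by
    rw [hXindep.mgf_sum hXmeas]
    calc ∏ i, mgf (X i) P t
        = Real.exp (∑ i, (t * d i + (r i : ℝ) * (Real.exp (t * c i) - 1))) := by
          rw [Real.exp_sum]; exact Finset.prod_congr rfl (fun i _ => hmgf i)
      _ ≤ Real.exp B := Real.exp_le_exp.mpr hB
  rw [hset]
  calc (P {ω | T ≤ (∑ i, X i) ω}).toReal ≤ Real.exp (-t * T) * mgf (∑ i, X i) P t := hchern
    _ ≤ Real.exp (-t * T) * Real.exp B := by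
        exact mul_le_mul_of_nonneg_left hmgfsum (Real.exp_pos _).le
    _ = Real.exp (-t * T + B) := by rw [← Real.exp_add]

set_option maxHeartbeats 1000000 in
lemma stmt3aux_arith (Rr nn α η xmax a b L q K s0 T v t : ℝ)
    (hR : 0 < Rr) (hn : 0 < nn) (hα : 0 < α) (hη0 : 0 < η)
    (hxmax0 : 0 < xmax) (hxmax1 : xmax < 1)
    (ha2 : a ^ 2 = 1 + η) (hb2 : b ^ 2 = η) (ha0 : 0 < a) (hb0 : 0 < b)
    (hL2 : L ^ 2 = Real.log 2) (hL0 : 0 < L)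
    (hq : q = (a + b + 1) / (2 * a)) (hK : K = 4 * L * (a + b + 1))
    (hs0sq : s0 ^ 2 = Rr / (nn * α)) (hs0pos : 0 < s0)
    (hT : T = nn * (K * s0) / 2) (hv : v = nn * xmax ^ 3 / α)
    (ht : t = T / (4 * q ^ 2 * v))
    (hRsmall : 4 * Real.log 2 * (1 + η) * Rr ≤ 9 * nn * xmax ^ 4 * α) :
    1 ≤ q ∧ 0 < t ∧ t * xmax / α ≤ 3 / (2 * q) ∧
      (1 + η) * Rr * Real.log 2 ≤ 3 / 4 * (t * T) := by
  have hln2 : (0:ℝ) < Real.log 2 := Real.log_pos one_lt_two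
  have ha1 : 1 ≤ a := by nlinarith
  have hab : a ≤ b + 1 := by nlinarith
  have hq1 : 1 ≤ q := by rw [hq, le_div_iff₀ (by positivity)]; linarith
  have hq0 : (0:ℝ) < q := by linarith
  have hK0 : 0 < K := by rw [hK]; positivity
  have hKq : K = 8 * L * a * q := by rw [hK, hq]; field_simp; ring
  have hT0 : 0 < T := by rw [hT]; positivity
  have hv0 : 0 < v := by rw [hv]; positivity
  have ht0 : 0 < t := by rw [ht]; positivity
  have hs0le : s0 * (2 * L * a) ≤ 3 * xmax ^ 2 := by
    have h1 : (s0 * (2 * L * a)) ^ 2 ≤ (3 * xmax ^ 2) ^ 2 := by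
      have e1 : (s0 * (2 * L * a)) ^ 2 = (Rr / (nn * α)) * (4 * Real.log 2 * (1 + η)) := by
        rw [mul_pow, hs0sq, mul_pow, mul_pow, hL2, ha2]; ring
      rw [e1]
      rw [div_mul_eq_mul_div, div_le_iff₀ (by positivity)]
      nlinarith [hRsmall]
    nlinarith [h1, mul_pos hs0pos (by positivity : (0:ℝ) < 2 * L * a)]
  refine ⟨hq1, ht0, ?_, ?_⟩
  · have h2 : t * xmax / α = K * s0 / (8 * q ^ 2 * xmax ^ 2) := by
      rw [ht, hT, hv]; field_simp; ring
    rw [h2, hKq, div_le_div_iff₀ (by positivity) (by positivity)]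
    have h8 := mul_le_mul_of_nonneg_left hs0le (by positivity : (0:ℝ) ≤ 8 * q ^ 2)
    linarith only [h8]
  · have htT : t * T = 4 * Real.log 2 * (1 + η) * Rr / xmax ^ 3 := by
      have h3 : t * T = T ^ 2 / (4 * q ^ 2 * v) := by rw [ht]; ring
      have hT2 : T ^ 2 = nn * K ^ 2 * Rr / (4 * α) := by
        have h4 : T ^ 2 = nn ^ 2 * K ^ 2 * s0 ^ 2 / 4 := by rw [hT]; ring
        rw [h4, hs0sq]; field_simp
      have hK2 : K ^ 2 = 64 * Real.log 2 * (1 + η) * q ^ 2 := by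
        have h5 : K ^ 2 = 64 * L ^ 2 * a ^ 2 * q ^ 2 := by rw [hKq]; ring
        rw [h5, hL2, ha2]
      rw [h3, hT2, hK2, hv]
      field_simp
      ring
    rw [htT]
    have heq9 : 3 / 4 * (4 * Real.log 2 * (1 + η) * Rr / xmax ^ 3)
        = 3 * Real.log 2 * (1 + η) * Rr / xmax ^ 3 := by ring
    rw [heq9, le_div_iff₀ (by positivity)]
    have hx3 : xmax ^ 3 ≤ 1 := pow_le_one₀ hxmax0.le hxmax1.le
    have hnn : (0:ℝ) ≤ (1 + η) * Rr * Real.log 2 := by positivity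
    linarith only [mul_le_mul_of_nonneg_left hx3 hnn, hnn]

lemma stmt3aux_term (α t q xmax w xi : ℝ)
    (hα : 0 < α) (ht0 : 0 ≤ t) (hq1 : 1 ≤ q) (hxmax0 : 0 < xmax)
    (hxi0 : 0 < xi) (hxim : xi ≤ xmax) (hw1 : -xmax ≤ w) (hw2 : w ≤ xmax)
    (htx : t * xmax / α ≤ 3 / (2 * q)) :
    t * (-(w * xi)) + (α * xi) * (Real.exp (t * (w / α)) - 1)
      ≤ q ^ 2 * t ^ 2 * xmax ^ 3 / α := by
  have hsle : t * (w / α) ≤ 3 / (2 * q) := by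
    refine le_trans ?_ htx
    rw [mul_div_assoc' t w α, div_le_div_iff₀ hα hα]
    exact mul_le_mul_of_nonneg_right (mul_le_mul_of_nonneg_left hw2 ht0) hα.le
  have hquad := stmt3aux_expquad hq1 hsle
  have hkeyeq : t * (-(w * xi)) + (α * xi) * (Real.exp (t * (w / α)) - 1)
      = (α * xi) * (Real.exp (t * (w / α)) - 1 - t * (w / α)) := by
    field_simp
    ring
  rw [hkeyeq]
  have hstep : (α * xi) * (Real.exp (t * (w / α)) - 1 - t * (w / α))
      ≤ (α * xi) * (q ^ 2 * (t * (w / α)) ^ 2) :=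
    mul_le_mul_of_nonneg_left (by linarith) (mul_pos hα hxi0).le
  refine hstep.trans ?_
  rw [le_div_iff₀ hα]
  have hfin : (α * xi) * (q ^ 2 * (t * (w / α)) ^ 2) * α
      = q ^ 2 * t ^ 2 * (xi * w ^ 2) := by
    field_simp
  rw [hfin]
  have hwsq : w ^ 2 ≤ xmax ^ 2 := by nlinarith
  have hxw : xi * w ^ 2 ≤ xmax ^ 3 := by nlinarith [sq_nonneg w]
  nlinarith [sq_nonneg (q * t), hxw]

set_option maxHeartbeats 1000000 in
/-- Compression-based denoising under Poisson noise with the squared-error surrogate: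
high-probability error bound. -/
theorem stmt3
    (n R : ℕ) (hn : 0 < n) (hR : 0 < R)
    (α : ℝ) (hα : 0 < α) (δ : ℝ) (hδ : 0 ≤ δ)
    (η : ℝ) (hη0 : 0 < η) (hη1 : η < 1)
    (xmax : ℝ) (hxmax0 : 0 < xmax) (hxmax1 : xmax < 1)
    (C : Finset (EuclideanSpace ℝ (Fin n)))
    (hCrange : ∀ c ∈ C, ∀ i, c i ∈ Set.Ioc 0 xmax)
    (hCcard : (C.card : ℝ) ≤ 2 ^ R)
    (x : EuclideanSpace ℝ (Fin n)) (hx : ∀ i, x i ∈ Set.Ioc 0 xmax)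
    (hdist : ∃ c ∈ C, (1 / n : ℝ) * ‖x - c‖ ^ 2 ≤ δ)
    {Ω : Type*} [MeasurableSpace Ω] (P : Measure Ω) [IsProbabilityMeasure P]
    (y : Fin n → Ω → ℕ) (hymeas : ∀ i, Measurable (y i))
    (hylaw : ∀ i, P.map (y i) = poissonMeasure (Real.toNNReal (α * x i)))
    (hyindep : iIndepFun y P)
    (xhat : Ω → EuclideanSpace ℝ (Fin n))
    (hmem : ∀ ω, xhat ω ∈ C)
    (hmin : ∀ ω, ∀ c ∈ C,
      ∑ i, (xhat ω i - (y i ω : ℝ) / α) ^ 2 ≤ ∑ i, (c i - (y i ω : ℝ) / α) ^ 2)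
    (hRsmall : 4 * Real.log 2 * (1 + η) * R ≤ 9 * n * xmax ^ 4 * α) :
    ENNReal.ofReal (1 - (2 : ℝ) ^ (-(η * R) + 2)) ≤
      P {ω | (1 / n : ℝ) * ‖x - xhat ω‖ ^ 2 ≤
        δ + 4 * Real.sqrt (Real.log 2) * (Real.sqrt (1 + η) + Real.sqrt η + 1) *
          Real.sqrt (R / (n * α))} := by
  classical
  obtain ⟨cs, hcsC, hcs⟩ := hdist
  have hln2 : (0:ℝ) < Real.log 2 := Real.log_pos one_lt_two
  have hn' : (0:ℝ) < n := by exact_mod_cast hn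
  have hR' : (0:ℝ) < R := by exact_mod_cast hR
  set a := Real.sqrt (1 + η) with hadef
  set b := Real.sqrt η with hbdef
  set L := Real.sqrt (Real.log 2) with hLdef
  set s0 := Real.sqrt ((R:ℝ) / (n * α)) with hs0def
  set K := 4 * L * (a + b + 1) with hKdef
  set D := K * s0 with hDdef
  set q := (a + b + 1) / (2 * a) with hqdef
  set T := (n:ℝ) * D / 2 with hTdef
  set v := (n:ℝ) * xmax ^ 3 / α with hvdef
  set t := T / (4 * q ^ 2 * v) with htdef
  have ha0 : 0 < a := Real.sqrt_pos.mpr (by linarith)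
  have hb0 : 0 < b := Real.sqrt_pos.mpr hη0
  have hL0 : 0 < L := Real.sqrt_pos.mpr hln2
  have hs0pos : 0 < s0 := Real.sqrt_pos.mpr (by positivity)
  obtain ⟨hq1, ht0, htx, hexp⟩ := stmt3aux_arith (R:ℝ) (n:ℝ) α η xmax a b L q K s0 T v t
    hR' hn' hα hη0 hxmax0 hxmax1
    (Real.sq_sqrt (by linarith)) (Real.sq_sqrt hη0.le) ha0 hb0
    (Real.sq_sqrt hln2.le) hL0 hqdef hKdef
    (Real.sq_sqrt (by positivity)) hs0pos (by rw [hTdef, hDdef]) hvdef htdef hRsmall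
  have hq0 : (0:ℝ) < q := by linarith
  have hT0 : 0 < T := by rw [hTdef, hDdef]; positivity
  have hv0 : 0 < v := by rw [hvdef]; positivity
  -- per-codeword tail bound
  set ε1 := Real.exp (-((1 + η) * R * Real.log 2)) with hε1def
  have tail : ∀ c ∈ C,
      P {ω | T ≤ ∑ i, ((c i - cs i) / α * (y i ω : ℝ) + -((c i - cs i) * x i))}
        ≤ ENNReal.ofReal ε1 := by
    intro c hc
    have hw1 : ∀ i, -xmax ≤ c i - cs i := fun i => by
      have := (hCrange c hc i).1; have := (hCrange cs hcsC i).2; linarith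
    have hw2 : ∀ i, c i - cs i ≤ xmax := fun i => by
      have := (hCrange c hc i).2; have := (hCrange cs hcsC i).1; linarith
    have hBsum : ∑ i, (t * (-((c i - cs i) * x i)) +
        ((Real.toNNReal (α * x i) : ℝ≥0) : ℝ) * (Real.exp (t * ((c i - cs i) / α)) - 1))
        ≤ t * T / 4 := by
      have hterm : ∀ i : Fin n, t * (-((c i - cs i) * x i)) +
          ((Real.toNNReal (α * x i) : ℝ≥0) : ℝ) * (Real.exp (t * ((c i - cs i) / α)) - 1)
          ≤ q ^ 2 * t ^ 2 * xmax ^ 3 / α := by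
        intro i
        have hrcoe : ((Real.toNNReal (α * x i) : ℝ≥0) : ℝ) = α * x i :=
          Real.coe_toNNReal _ (mul_pos hα (hx i).1).le
        rw [hrcoe]
        exact stmt3aux_term α t q xmax (c i - cs i) (x i) hα ht0.le hq1 hxmax0
          (hx i).1 (hx i).2 (hw1 i) (hw2 i) htx
      calc ∑ i, (t * (-((c i - cs i) * x i)) +
            ((Real.toNNReal (α * x i) : ℝ≥0) : ℝ) * (Real.exp (t * ((c i - cs i) / α)) - 1))
          ≤ ∑ _i : Fin n, q ^ 2 * t ^ 2 * xmax ^ 3 / α :=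
            Finset.sum_le_sum (fun i _ => hterm i)
        _ = (n:ℝ) * (q ^ 2 * t ^ 2 * xmax ^ 3 / α) := by
            rw [Finset.sum_const, Finset.card_univ, Fintype.card_fin, nsmul_eq_mul]
        _ = q ^ 2 * t ^ 2 * v := by rw [hvdef]; field_simp
        _ = t * T / 4 := by
            rw [htdef]
            field_simp
    have hch := stmt3aux_chernoff P y hymeas (fun i => Real.toNNReal (α * x i)) hylaw hyindep
      (fun i => (c i - cs i) / α) (fun i => -((c i - cs i) * x i)) t ht0.le T (t * T / 4) hBsum
    have hexp2 : Real.exp (-t * T + t * T / 4) ≤ ε1 := by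
      rw [hε1def, Real.exp_le_exp]
      linarith only [hexp]
    calc P {ω | T ≤ ∑ i, ((c i - cs i) / α * (y i ω : ℝ) + -((c i - cs i) * x i))}
        = ENNReal.ofReal ((P _).toReal) := (ENNReal.ofReal_toReal (measure_ne_top P _)).symm
      _ ≤ ENNReal.ofReal ε1 := ENNReal.ofReal_le_ofReal (hch.trans hexp2)
  -- squared norm as coordinate sum
  have hnorm : ∀ u w : EuclideanSpace ℝ (Fin n), ‖u - w‖ ^ 2 = ∑ i, (u i - w i) ^ 2 := by
    intro u w
    rw [EuclideanSpace.norm_eq, Real.sq_sqrt (by positivity)]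
    exact Finset.sum_congr rfl (fun i _ => by
      rw [show (u - w) i = u i - w i from rfl, Real.norm_eq_abs, sq_abs])
  have hcs' : ∑ i, (x i - cs i) ^ 2 ≤ (n:ℝ) * δ := by
    have h := hcs
    rw [hnorm x cs, one_div, inv_mul_le_iff₀ hn'] at h
    exact h
  set G := {ω | (1 / n : ℝ) * ‖x - xhat ω‖ ^ 2 ≤ δ + D} with hGdef
  have hsub : Gᶜ ⊆ ⋃ c ∈ C,
      {ω | T ≤ ∑ i, ((c i - cs i) / α * (y i ω : ℝ) + -((c i - cs i) * x i))} := by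
    intro ω hω
    simp only [hGdef, Set.mem_compl_iff, Set.mem_setOf_eq, not_le] at hω
    rw [hnorm x (xhat ω), one_div, lt_inv_mul_iff₀ hn'] at hω
    refine Set.mem_biUnion (hmem ω) ?_
    simp only [Set.mem_setOf_eq]
    have hα' : α ≠ 0 := hα.ne'
    have hid : ∀ i : Fin n, (x i - xhat ω i) ^ 2 = (x i - cs i) ^ 2 +
        ((xhat ω i - (y i ω : ℝ) / α) ^ 2 - (cs i - (y i ω : ℝ) / α) ^ 2) +
        2 * ((xhat ω i - cs i) / α * (y i ω : ℝ) + -((xhat ω i - cs i) * x i)) := by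
      intro i
      field_simp
      ring
    have hsum1 : ∑ i, (x i - xhat ω i) ^ 2 = ∑ i, (x i - cs i) ^ 2 +
        (∑ i, (xhat ω i - (y i ω : ℝ) / α) ^ 2 - ∑ i, (cs i - (y i ω : ℝ) / α) ^ 2) +
        2 * ∑ i, ((xhat ω i - cs i) / α * (y i ω : ℝ) + -((xhat ω i - cs i) * x i)) := by
      rw [Finset.mul_sum, ← Finset.sum_sub_distrib, ← Finset.sum_add_distrib,
        ← Finset.sum_add_distrib]
      exact Finset.sum_congr rfl (fun i _ => hid i)
    have hmin' := hmin ω cs hcsC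
    have hTeq : T = (n:ℝ) * D / 2 := hTdef
    linarith only [hω, hsum1, hmin', hcs', hTeq]
  have hε1pos : (0:ℝ) ≤ ε1 := by rw [hε1def]; positivity
  have hPbad : P Gᶜ ≤ ENNReal.ofReal ((2:ℝ) ^ R * ε1) := by
    refine (measure_mono hsub).trans ((measure_biUnion_finset_le C _).trans ?_)
    calc ∑ c ∈ C, P {ω | T ≤ ∑ i, ((c i - cs i) / α * (y i ω : ℝ) + -((c i - cs i) * x i))}
        ≤ ∑ _c ∈ C, ENNReal.ofReal ε1 := Finset.sum_le_sum (fun c hc => tail c hc)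
      _ = C.card • ENNReal.ofReal ε1 := by rw [Finset.sum_const]
      _ = (C.card : ℝ≥0∞) * ENNReal.ofReal ε1 := by rw [nsmul_eq_mul]
      _ = ENNReal.ofReal ((C.card : ℝ) * ε1) := by
          rw [ENNReal.ofReal_mul (Nat.cast_nonneg _), ENNReal.ofReal_natCast]
      _ ≤ ENNReal.ofReal ((2:ℝ) ^ R * ε1) :=
          ENNReal.ofReal_le_ofReal (mul_le_mul_of_nonneg_right hCcard hε1pos)
  have h2R : (2:ℝ) ^ R * ε1 ≤ (2:ℝ) ^ (-(η * (R:ℝ)) + 2) := by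
    have e0 : (2:ℝ) ^ R = Real.exp ((R:ℝ) * Real.log 2) := by
      rw [← Real.log_pow, Real.exp_log (by positivity)]
    have e1 : (2:ℝ) ^ R * ε1 = Real.exp ((R:ℝ) * Real.log 2 + -((1 + η) * R * Real.log 2)) := by
      rw [hε1def, e0, ← Real.exp_add]
    have e2 : (2:ℝ) ^ (-(η * (R:ℝ)) + 2) = Real.exp (Real.log 2 * (-(η * (R:ℝ)) + 2)) := by
      rw [Real.rpow_def_of_pos two_pos]
    rw [e1, e2, Real.exp_le_exp]
    nlinarith [hln2.le]
  have huniv : (1:ℝ≥0∞) ≤ P G + P Gᶜ := by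
    have h1 := measure_union_le (μ := P) G Gᶜ
    rw [Set.union_compl_self, measure_univ] at h1
    exact h1
  show ENNReal.ofReal (1 - (2 : ℝ) ^ (-(η * (R:ℝ)) + 2)) ≤ P G
  rcases le_or_gt (1 - (2:ℝ) ^ (-(η * (R:ℝ)) + 2)) 0 with hneg | hpos
  · rw [ENNReal.ofReal_of_nonpos hneg]
    exact zero_le
  · have hofadd : ENNReal.ofReal (1 - (2:ℝ) ^ (-(η * (R:ℝ)) + 2))
        + ENNReal.ofReal ((2:ℝ) ^ R * ε1) ≤ 1 := by
      rw [← ENNReal.ofReal_add (by linarith) (by positivity), ← ENNReal.ofReal_one]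
      apply ENNReal.ofReal_le_ofReal
      linarith only [h2R]
    have hchain : ENNReal.ofReal (1 - (2:ℝ) ^ (-(η * (R:ℝ)) + 2))
        + ENNReal.ofReal ((2:ℝ) ^ R * ε1)
        ≤ P G + ENNReal.ofReal ((2:ℝ) ^ R * ε1) :=
      hofadd.trans (huniv.trans (add_le_add_right hPbad _))
    exact (ENNReal.add_le_add_iff_right ENNReal.ofReal_ne_top).mp hchain
end

section
/- Let 0 < α_m ≤ α_M < ∞ and let α₁, α₂ ∈ [α_m, α_M]. Then the Kullback–Leibler divergence between the Poisson distributions with means α₁ and α₂, which equals α₂ − α₁ + α₁ ln(α₁/α₂), satisfies (α_m/α_M)² · (α₂ − α₁)² / (2α₁) ≤ α₂ − α₁ + α₁ ln(α₁/α₂) ≤ (α_M/α_m)² · (α₂ − α₁)² / (2α₁). -/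
private lemma deriv_aux (b : ℝ) {t : ℝ} (ht : 0 < t) :
    HasDerivAt (fun s : ℝ => s - 1 - Real.log s - b * (s - 1) ^ 2 / 2)
      (1 - 1 / t - b * (t - 1)) t := by
  have h1 : HasDerivAt (fun s : ℝ => s - 1) 1 t := (hasDerivAt_id t).sub_const 1
  have h2 : HasDerivAt Real.log (1 / t) t := by
    simpa [one_div] using Real.hasDerivAt_log (ne_of_gt ht)
  have h3 : HasDerivAt (fun s : ℝ => b * (s - 1) ^ 2 / 2) (b * (t - 1)) t := by
    have hsq : HasDerivAt (fun s : ℝ => (s - 1) ^ 2) (2 * (t - 1)) t := by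
      simpa using ((hasDerivAt_id t).sub_const 1).fun_pow 2
    have := (hsq.const_mul b).div_const 2
    rw [show b * (t - 1) = b * (2 * (t - 1)) / 2 by ring]
    exact this
  simpa using (h1.fun_sub h2).fun_sub h3

private lemma key_lower {b x : ℝ} (hb : 0 < b) (hb1 : b ≤ 1) (hx : 0 < x)
    (hbx : b * x ≤ 1) :
    b * (x - 1) ^ 2 / 2 ≤ x - 1 - Real.log x := by
  set f : ℝ → ℝ := fun s => s - 1 - Real.log s - b * (s - 1) ^ 2 / 2 with hf
  have hf1 : f 1 = 0 := by simp [hf]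
  suffices h : 0 ≤ f x by
    have : f x = x - 1 - Real.log x - b * (x - 1) ^ 2 / 2 := rfl
    linarith [this ▸ h]
  rcases le_total x 1 with hx1 | hx1
  · -- antitone on [x, 1]
    have hanti : AntitoneOn f (Set.Icc x 1) := by
      have hdiff : ∀ t ∈ Set.Icc x 1, 0 < t := fun t ht => lt_of_lt_of_le hx ht.1
      apply antitoneOn_of_deriv_nonpos (convex_Icc x 1)
      · exact fun t ht =>
          ((deriv_aux b (hdiff t ht)).differentiableAt.continuousAt).continuousWithinAt
      · intro t ht
        have ht' : t ∈ Set.Icc x 1 := interior_subset ht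
        exact ((deriv_aux b (hdiff t ht')).differentiableAt).differentiableWithinAt
      · intro t ht
        rw [interior_Icc] at ht
        have htpos : 0 < t := lt_trans hx ht.1
        rw [(deriv_aux b htpos).deriv]
        have h1 : t ≤ 1 := le_of_lt ht.2
        have h2 : b * t ≤ 1 := le_trans (by nlinarith) hb1
        have key : t * (1 - 1 / t - b * (t - 1)) = (t - 1) * (1 - b * t) := by
          field_simp
        nlinarith
    have := hanti (Set.mem_Icc.2 ⟨le_refl x, hx1⟩) (Set.mem_Icc.2 ⟨hx1, le_refl 1⟩) hx1
    rw [hf1] at this; exact this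
  · -- monotone on [1, x]
    have hmono : MonotoneOn f (Set.Icc 1 x) := by
      have hdiff : ∀ t ∈ Set.Icc 1 x, 0 < t := fun t ht => lt_of_lt_of_le one_pos ht.1
      apply monotoneOn_of_deriv_nonneg (convex_Icc 1 x)
      · exact fun t ht =>
          ((deriv_aux b (hdiff t ht)).differentiableAt.continuousAt).continuousWithinAt
      · intro t ht
        have ht' : t ∈ Set.Icc 1 x := interior_subset ht
        exact ((deriv_aux b (hdiff t ht')).differentiableAt).differentiableWithinAt
      · intro t ht
        rw [interior_Icc] at ht
        have htpos : 0 < t := lt_trans one_pos ht.1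
        rw [(deriv_aux b htpos).deriv]
        have h1 : 1 ≤ t := le_of_lt ht.1
        have h2 : b * t ≤ 1 := le_trans (by nlinarith [ht.2]) hbx
        have : t * (1 - 1 / t - b * (t - 1)) = (t - 1) * (1 - b * t) := by
          field_simp
        nlinarith
    have := hmono (Set.mem_Icc.2 ⟨le_refl 1, hx1⟩) (Set.mem_Icc.2 ⟨hx1, le_refl x⟩) hx1
    rw [hf1] at this; exact this

private lemma key_upper {B x : ℝ} (hB : 1 ≤ B) (hx : 0 < x)
    (hBx : 1 ≤ B * x) :
    x - 1 - Real.log x ≤ B * (x - 1) ^ 2 / 2 := by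
  set g : ℝ → ℝ := fun s => -(s - 1 - Real.log s - B * (s - 1) ^ 2 / 2) with hg
  have hg1 : g 1 = 0 := by simp [hg]
  have hderiv : ∀ {t : ℝ}, 0 < t →
      HasDerivAt g (-(1 - 1 / t - B * (t - 1))) t := fun ht => (deriv_aux B ht).neg
  suffices h : 0 ≤ g x by
    have : g x = -(x - 1 - Real.log x - B * (x - 1) ^ 2 / 2) := rfl
    linarith [this ▸ h]
  rcases le_total x 1 with hx1 | hx1
  · have hanti : AntitoneOn g (Set.Icc x 1) := by
      have hdiff : ∀ t ∈ Set.Icc x 1, 0 < t := fun t ht => lt_of_lt_of_le hx ht.1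
      apply antitoneOn_of_deriv_nonpos (convex_Icc x 1)
      · exact fun t ht =>
          ((hderiv (hdiff t ht)).differentiableAt.continuousAt).continuousWithinAt
      · intro t ht
        have ht' : t ∈ Set.Icc x 1 := interior_subset ht
        exact ((hderiv (hdiff t ht')).differentiableAt).differentiableWithinAt
      · intro t ht
        rw [interior_Icc] at ht
        have htpos : 0 < t := lt_trans hx ht.1
        rw [(hderiv htpos).deriv]
        have h1 : t ≤ 1 := le_of_lt ht.2
        have h2 : 1 ≤ B * t := le_trans hBx (by nlinarith [le_of_lt ht.1])
        have key : t * (-(1 - 1 / t - B * (t - 1))) = -((t - 1) * (1 - B * t)) := by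
          field_simp
        nlinarith
    have := hanti (Set.mem_Icc.2 ⟨le_refl x, hx1⟩) (Set.mem_Icc.2 ⟨hx1, le_refl 1⟩) hx1
    rw [hg1] at this; exact this
  · have hmono : MonotoneOn g (Set.Icc 1 x) := by
      have hdiff : ∀ t ∈ Set.Icc 1 x, 0 < t := fun t ht => lt_of_lt_of_le one_pos ht.1
      apply monotoneOn_of_deriv_nonneg (convex_Icc 1 x)
      · exact fun t ht =>
          ((hderiv (hdiff t ht)).differentiableAt.continuousAt).continuousWithinAt
      · intro t ht
        have ht' : t ∈ Set.Icc 1 x := interior_subset ht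
        exact ((hderiv (hdiff t ht')).differentiableAt).differentiableWithinAt
      · intro t ht
        rw [interior_Icc] at ht
        have htpos : 0 < t := lt_trans one_pos ht.1
        rw [(hderiv htpos).deriv]
        have h1 : 1 ≤ t := le_of_lt ht.1
        have h2 : 1 ≤ B * t := by nlinarith
        have key : t * (-(1 - 1 / t - B * (t - 1))) = -((t - 1) * (1 - B * t)) := by
          field_simp
        nlinarith
    have := hmono (Set.mem_Icc.2 ⟨le_refl 1, hx1⟩) (Set.mem_Icc.2 ⟨hx1, le_refl x⟩) hx1
    rw [hg1] at this; exact this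

/-- Two-sided quadratic bounds on the KL divergence between Poisson distributions,
`D_KL(Poisson(α₁) ‖ Poisson(α₂)) = α₂ − α₁ + α₁ ln(α₁/α₂)`. -/
theorem stmt4 (αm αM α1 α2 : ℝ) (hm : 0 < αm) (hmM : αm ≤ αM)
    (h1 : α1 ∈ Set.Icc αm αM) (h2 : α2 ∈ Set.Icc αm αM) :
    (αm / αM) ^ 2 * ((α2 - α1) ^ 2 / (2 * α1)) ≤ α2 - α1 + α1 * Real.log (α1 / α2) ∧
      α2 - α1 + α1 * Real.log (α1 / α2) ≤ (αM / αm) ^ 2 * ((α2 - α1) ^ 2 / (2 * α1)) := by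
  obtain ⟨hm1, hM1⟩ := h1
  obtain ⟨hm2, hM2⟩ := h2
  have hM : 0 < αM := lt_of_lt_of_le hm hmM
  have h1p : 0 < α1 := lt_of_lt_of_le hm hm1
  have h2p : 0 < α2 := lt_of_lt_of_le hm hm2
  set x : ℝ := α2 / α1 with hxdef
  have hxpos : 0 < x := div_pos h2p h1p
  set b : ℝ := (αm / αM) ^ 2 with hbdef
  set B : ℝ := (αM / αm) ^ 2 with hBdef
  have hb : 0 < b := pow_pos (div_pos hm hM) 2
  have hb1 : b ≤ 1 := pow_le_one₀ (le_of_lt (div_pos hm hM)) (div_le_one_of_le₀ hmM (le_of_lt hM))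
  have hB : 1 ≤ B := one_le_pow₀ ((one_le_div hm).2 hmM)
  have hbx : b * x ≤ 1 := by
    rw [hbdef, hxdef, div_pow, div_mul_div_comm, div_le_one (by positivity)]
    nlinarith [mul_le_mul_of_nonneg_left hM2 (sq_nonneg αm),
      mul_le_mul_of_nonneg_left hmM (mul_pos hm hM).le,
      mul_le_mul_of_nonneg_left hm1 (sq_nonneg αM)]
  have hBx : 1 ≤ B * x := by
    rw [hBdef, hxdef, div_pow, div_mul_div_comm, le_div_iff₀ (by positivity)]
    nlinarith [mul_le_mul_of_nonneg_left hM1 (sq_nonneg αm),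
      mul_le_mul_of_nonneg_left hmM (mul_pos hm hM).le,
      mul_le_mul_of_nonneg_left hm2 (sq_nonneg αM)]
  have hlow := key_lower hb hb1 hxpos hbx
  have hup := key_upper hB hxpos hBx
  have hlog : Real.log x = Real.log α2 - Real.log α1 := Real.log_div (ne_of_gt h2p) (ne_of_gt h1p)
  have hlog' : Real.log (α1 / α2) = Real.log α1 - Real.log α2 :=
    Real.log_div (ne_of_gt h1p) (ne_of_gt h2p)
  have hmul_low := mul_le_mul_of_nonneg_left hlow (le_of_lt h1p)
  have hmul_up := mul_le_mul_of_nonneg_left hup (le_of_lt h1p)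
  have hx1 : α1 * (x - 1) = α2 - α1 := by
    rw [hxdef]; field_simp
  have hexp : α1 * (x - 1 - Real.log x) = α2 - α1 + α1 * Real.log (α1 / α2) := by
    rw [hlog, hlog', hxdef]; field_simp; ring
  have hsq : α1 * (b * (x - 1) ^ 2 / 2) = b * ((α2 - α1) ^ 2 / (2 * α1)) := by
    rw [hxdef]; field_simp
  have hsq' : α1 * (B * (x - 1) ^ 2 / 2) = B * ((α2 - α1) ^ 2 / (2 * α1)) := by
    rw [hxdef]; field_simp
  constructor
  · calc b * ((α2 - α1) ^ 2 / (2 * α1)) = α1 * (b * (x - 1) ^ 2 / 2) := hsq.symm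
      _ ≤ α1 * (x - 1 - Real.log x) := hmul_low
      _ = α2 - α1 + α1 * Real.log (α1 / α2) := hexp
  · calc α2 - α1 + α1 * Real.log (α1 / α2) = α1 * (x - 1 - Real.log x) := hexp.symm
      _ ≤ α1 * (B * (x - 1) ^ 2 / 2) := hmul_up
      _ = B * ((α2 - α1) ^ 2 / (2 * α1)) := hsq'
end

section
/- Let Y₁, …, Y_n be independent random variables with Y_i ∼ Poisson(α_i) for α_i > 0, and let w₁, …, w_n ∈ ℝ be not all zero. Set σ_n² = Σ_{i=1}^n w_i² α_i and w_M = max_{1 ≤ i ≤ n} |w_i|. Then for every t with 0 ≤ t ≤ 3σ_n²/(2 w_M), one has P( Σ_{i=1}^n w_i Y_i ≥ Σ_{i=1}^n w_i α_i + t ) ≤ exp( − t² / (2(σ_n² + w_M t / 3)) ). -/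
open MeasureTheory ProbabilityTheory

open Real NNReal

lemma fact_ge_aux : ∀ k : ℕ, 2 * 3 ^ k ≤ (k + 2).factorial := by
  intro k
  induction k with
  | zero => simp [Nat.factorial]
  | succ k ih =>
    have h3 : 3 ≤ k + 3 := by omega
    calc 2 * 3 ^ (k + 1) = 3 * (2 * 3 ^ k) := by ring
    _ ≤ 3 * (k + 2).factorial := by omega
    _ ≤ (k + 3) * (k + 2).factorial := Nat.mul_le_mul_right _ h3
    _ = (k + 3).factorial := rfl

lemma exp_quad_neg {x : ℝ} (hx : x ≤ 0) : Real.exp x ≤ 1 + x + x ^ 2 / 2 := by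
  have hd : ∀ y : ℝ, HasDerivAt (fun y => Real.exp y - (1 + y + y ^ 2 / 2))
      (Real.exp y - (1 + y)) y := by
    intro y
    have h2 : HasDerivAt (fun y : ℝ => y ^ 2 / 2) y y := by
      simpa using (hasDerivAt_pow 2 y).div_const 2
    have h1 : HasDerivAt (fun y : ℝ => 1 + y + y ^ 2 / 2) (1 + y) y := by
      simpa using ((hasDerivAt_const y (1:ℝ)).fun_add (hasDerivAt_id' y)).fun_add h2
    exact (Real.hasDerivAt_exp y).fun_sub h1
  have hmono : MonotoneOn (fun y => Real.exp y - (1 + y + y ^ 2 / 2)) (Set.Iic 0) := by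
    apply monotoneOn_of_deriv_nonneg (convex_Iic (0:ℝ))
    · exact (Real.continuous_exp.sub (by continuity)).continuousOn
    · exact fun y hy => (hd y).differentiableAt.differentiableWithinAt
    · intro y hy
      rw [(hd y).deriv]
      nlinarith [Real.add_one_le_exp y]
  have := hmono (Set.mem_Iic.2 hx) (Set.mem_Iic.2 le_rfl) hx
  simp only [Real.exp_zero] at this
  nlinarith

lemma key_ineq {x c : ℝ} (hc0 : 0 ≤ c) (hc1 : c < 1) (hx : x ≤ 3 * c) :
    Real.exp x - 1 - x ≤ x ^ 2 / (2 * (1 - c)) := by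
  have hc1' : 0 < 1 - c := by linarith
  rcases le_or_gt x 0 with hx0 | hx0
  · have h1 := exp_quad_neg hx0
    have h2 : x ^ 2 / 2 ≤ x ^ 2 / (2 * (1 - c)) := by
      apply div_le_div_of_nonneg_left (sq_nonneg x) (by linarith) (by nlinarith)
    linarith
  · -- 0 < x, x ≤ 3c, x/3 ≤ c < 1
    have hx3 : x / 3 < 1 := by linarith
    have hexp : HasSum (fun k : ℕ => x ^ k / k.factorial) (Real.exp x) := by
      rw [Real.exp_eq_exp_ℝ]
      exact NormedSpace.expSeries_div_hasSum_exp x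
    have htail : HasSum (fun k : ℕ => x ^ (k + 2) / (k + 2).factorial)
        (Real.exp x - 1 - x) := by
      have h := (hasSum_nat_add_iff' (f := fun k : ℕ => x ^ k / k.factorial)
        (g := Real.exp x) 2).2 hexp
      simp only [Finset.sum_range_succ, Finset.sum_range_zero, Nat.factorial,
        Nat.cast_one, pow_zero, pow_one, zero_add] at h
      have e1 : (fun k : ℕ => x ^ (k + 2) / ((k + 2).factorial : ℝ)) =
          fun n => x ^ (n + 2) / (((n + 1).succ * (n.succ * n.factorial) : ℕ) : ℝ) := rfl
      rw [e1, show Real.exp x - 1 - x = Real.exp x - (1 / 1 + x / ((Nat.succ 0 * 1 : ℕ) : ℝ)) by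
        push_cast; ring]
      exact h
    have hgeom : HasSum (fun k : ℕ => x ^ 2 / 2 * (x / 3) ^ k)
        (x ^ 2 / 2 * (1 - x / 3)⁻¹) :=
      (hasSum_geometric_of_lt_one (by positivity) hx3).mul_left _
    have hle : Real.exp x - 1 - x ≤ x ^ 2 / 2 * (1 - x / 3)⁻¹ := by
      refine hasSum_le (fun k => ?_) htail hgeom
      have hfac : (2 * 3 ^ k : ℝ) ≤ (k + 2).factorial := by
        exact_mod_cast fact_ge_aux k
      have h3k : (0:ℝ) < 3 ^ k := by positivity
      rw [div_pow, show x ^ 2 / 2 * (x ^ k / 3 ^ k) = x ^ (k + 2) / (2 * 3 ^ k) by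
        rw [pow_add]; ring]
      exact div_le_div_of_nonneg_left (by positivity) (by positivity) hfac
    have hfin : x ^ 2 / 2 * (1 - x / 3)⁻¹ ≤ x ^ 2 / (2 * (1 - c)) := by
      rw [show x ^ 2 / 2 * (1 - x / 3)⁻¹ = x ^ 2 / (2 * (1 - x / 3)) by
        rw [div_mul_eq_div_div]; field_simp]
      apply div_le_div_of_nonneg_left (sq_nonneg x) (by positivity) (by nlinarith)
    linarith

lemma poisson_hasSum (r u : ℝ) (hr : 0 ≤ r) :
    HasSum (fun n : ℕ => Real.exp (-r) * r ^ n / n.factorial * Real.exp (u * n))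
      (Real.exp (r * (Real.exp u - 1))) := by
  have h : HasSum (fun n : ℕ => (r * Real.exp u) ^ n / n.factorial)
      (Real.exp (r * Real.exp u)) := by
    rw [Real.exp_eq_exp_ℝ]
    exact NormedSpace.expSeries_div_hasSum_exp _
  have h2 := h.mul_left (Real.exp (-r))
  have heq : (fun n : ℕ => Real.exp (-r) * r ^ n / n.factorial * Real.exp (u * n)) =
      fun n : ℕ => Real.exp (-r) * ((r * Real.exp u) ^ n / n.factorial) := by
    funext n
    rw [mul_pow, mul_comm u (n : ℝ), Real.exp_nat_mul]
    ring
  have hval : Real.exp (-r) * Real.exp (r * Real.exp u) = Real.exp (r * (Real.exp u - 1)) := by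
    rw [← Real.exp_add]; ring_nf
  rw [heq, ← hval]
  exact h2

lemma poissonPMF_apply (r : ℝ≥0) (n : ℕ) :
    poissonPMF r n = ENNReal.ofReal (poissonPMFReal r n) := rfl

lemma poisson_term_eq (r : ℝ≥0) (u : ℝ) (n : ℕ) :
    (‖Real.exp (u * n)‖₊ : ENNReal) * poissonMeasure r {n} =
      ENNReal.ofReal (Real.exp (-(r:ℝ)) * (r:ℝ) ^ n / n.factorial * Real.exp (u * n)) := by
  rw [poissonMeasure_singleton]
  rw [← enorm_eq_nnnorm, Real.enorm_eq_ofReal (Real.exp_pos _).le, ← ENNReal.ofReal_mul (Real.exp_pos _).le]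
  congr 1
  ring

lemma poisson_integrable (r : ℝ≥0) (u : ℝ) :
    Integrable (fun n : ℕ => Real.exp (u * n)) (poissonMeasure r) := by
  have hsummable : Summable (fun n : ℕ =>
      Real.exp (-(r:ℝ)) * (r:ℝ) ^ n / n.factorial * Real.exp (u * n)) :=
    (poisson_hasSum r u r.2).summable
  constructor
  · exact (measurable_from_top (f := fun n : ℕ => Real.exp (u * n))).aestronglyMeasurable
  · rw [HasFiniteIntegral, lintegral_countable']
    simp_rw [enorm_eq_nnnorm, poisson_term_eq r u]
    rw [← ENNReal.ofReal_tsum_of_nonneg (fun n => by positivity) hsummable]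
    exact ENNReal.ofReal_lt_top

lemma poisson_mgf (r : ℝ≥0) (u : ℝ) :
    ∫ n : ℕ, Real.exp (u * n) ∂(poissonMeasure r) = Real.exp ((r:ℝ) * (Real.exp u - 1)) := by
  rw [integral_poissonMeasure' (poisson_integrable r u)]
  have : ∀ n : ℕ, (Real.exp (-(r:ℝ)) * (r:ℝ) ^ n / n.factorial) • Real.exp (u * n) =
      Real.exp (-(r:ℝ)) * (r:ℝ) ^ n / n.factorial * Real.exp (u * n) := by
    intro n
    rw [smul_eq_mul]
  simp_rw [this]
  exact (poisson_hasSum r u r.2).tsum_eq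

/-- Bernstein-type upper tail bound for weighted sums of independent Poisson
random variables. -/
theorem stmt5
    {Ω : Type*} [MeasurableSpace Ω] (P : Measure Ω) [IsProbabilityMeasure P]
    (n : ℕ) (hn : 0 < n)
    (α w : Fin n → ℝ) (hα : ∀ i, 0 < α i) (hw : ∃ i, w i ≠ 0)
    (Y : Fin n → Ω → ℕ) (hmeas : ∀ i, Measurable (Y i))
    (hlaw : ∀ i, P.map (Y i) = poissonMeasure (Real.toNNReal (α i)))
    (hindep : iIndepFun Y P)
    (σn2 wM : ℝ)
    (hσ : σn2 = ∑ i, w i ^ 2 * α i)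
    (hwM : IsGreatest (Set.range fun i => |w i|) wM)
    (t : ℝ) (ht0 : 0 ≤ t) (ht : t ≤ 3 * σn2 / (2 * wM)) :
    P {ω | ∑ i, w i * α i + t ≤ ∑ i, w i * (Y i ω : ℝ)} ≤
      ENNReal.ofReal (Real.exp (-t ^ 2 / (2 * (σn2 + wM * t / 3)))) := by
  obtain ⟨i₀, hi₀⟩ := hw
  have hσpos : 0 < σn2 := by
    rw [hσ]
    apply Finset.sum_pos' (fun j _ => by nlinarith [sq_nonneg (w j), (hα j).le])
    refine ⟨i₀, Finset.mem_univ _, ?_⟩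
    have : 0 < w i₀ ^ 2 := by rw [← sq_abs]; exact pow_pos (abs_pos.2 hi₀) 2
    exact mul_pos this (hα i₀)
  have hwMpos : 0 < wM :=
    lt_of_lt_of_le (abs_pos.2 hi₀) (hwM.2 (Set.mem_range_self i₀))
  set D : ℝ := σn2 + wM * t / 3 with hDdef
  have hD : 0 < D := by positivity
  set s : ℝ := t / D with hsdef
  have hs0 : 0 ≤ s := div_nonneg ht0 hD.le
  set c : ℝ := s * wM / 3 with hcdef
  have hc0 : 0 ≤ c := by positivity
  have hc1 : c < 1 := by
    rw [hcdef, hsdef, div_lt_one (by norm_num : (0:ℝ) < 3)]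
    rw [div_mul_eq_mul_div, div_lt_iff₀ hD, hDdef]
    nlinarith
  have h1c : 1 - c = σn2 / D := by
    rw [hcdef, hsdef]
    field_simp
    ring
  -- the individual weighted variables
  set X : Fin n → Ω → ℝ := fun i ω => w i * (Y i ω : ℝ) with hXdef
  have hmeasX : ∀ i, Measurable (X i) :=
    fun i => (measurable_from_top.comp (hmeas i)).const_mul (w i)
  have hindepX : iIndepFun X P := by
    have := hindep.comp (fun i (y : ℕ) => w i * (y : ℝ))
      (fun i => measurable_from_top)
    exact this
  -- integrability and mgf of each X i
  have hXcomp : ∀ i, (fun ω => Real.exp (s * X i ω)) =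
      (fun y : ℕ => Real.exp ((s * w i) * (y : ℝ))) ∘ Y i := by
    intro i; funext ω; simp [hXdef, mul_assoc]
  have h_int : ∀ i, Integrable (fun ω => Real.exp (s * X i ω)) P := by
    intro i
    rw [hXcomp i]
    have h := poisson_integrable (Real.toNNReal (α i)) (s * w i)
    rw [← hlaw i] at h
    exact (integrable_map_measure
      (measurable_from_top (f := fun y : ℕ => Real.exp ((s * w i) * (y : ℝ)))).aestronglyMeasurable
      (hmeas i).aemeasurable).mp h
  have hmgfX : ∀ i, mgf (X i) P s = Real.exp (α i * (Real.exp (s * w i) - 1)) := by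
    intro i
    rw [mgf]
    have heq : ∫ ω, Real.exp (s * X i ω) ∂P =
        ∫ y : ℕ, Real.exp ((s * w i) * (y : ℝ)) ∂(P.map (Y i)) := by
      rw [integral_map (hmeas i).aemeasurable
        (measurable_from_top (f := fun y : ℕ => Real.exp ((s * w i) * (y : ℝ)))).aestronglyMeasurable]
      congr 1
      funext ω
      simp [hXdef, mul_assoc]
    rw [heq, hlaw i, poisson_mgf, Real.coe_toNNReal _ (hα i).le]
  -- Chernoff bound
  set μs : ℝ := ∑ i, w i * α i with hμs
  have hsetX : {ω | μs + t ≤ ∑ i, w i * (Y i ω : ℝ)} =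
      {ω | μs + t ≤ (∑ i, X i) ω} := by
    ext ω; simp [hXdef, Finset.sum_apply]
  have h_int_sum : Integrable (fun ω => Real.exp (s * (∑ i, X i) ω)) P :=
    hindepX.integrable_exp_mul_sum hmeasX (fun i _ => h_int i)
  have hcher := measure_ge_le_exp_mul_mgf (μ := P) (X := ∑ i, X i) (t := s)
    (μs + t) hs0 h_int_sum
  -- compute mgf of the sum
  have hmgfsum : mgf (∑ i, X i) P s = Real.exp (∑ i, α i * (Real.exp (s * w i) - 1)) := by
    rw [hindepX.mgf_sum hmeasX, Real.exp_sum]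
    exact Finset.prod_congr rfl fun i _ => hmgfX i
  -- exponent bound
  have hterm : ∀ i, α i * (Real.exp (s * w i) - 1) ≤
      α i * (s * w i) + α i * ((s * w i) ^ 2 / (2 * (1 - c))) := by
    intro i
    have hx : s * w i ≤ 3 * c := by
      rw [hcdef]
      have h1 : w i ≤ wM := (le_abs_self _).trans (hwM.2 (Set.mem_range_self i))
      have := mul_le_mul_of_nonneg_left h1 hs0
      linarith
    have hk := key_ineq hc0 hc1 hx
    nlinarith [(hα i).le]
  have hsum_le : ∑ i, α i * (Real.exp (s * w i) - 1) ≤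
      s * μs + s ^ 2 * σn2 / (2 * (1 - c)) := by
    calc ∑ i, α i * (Real.exp (s * w i) - 1)
        ≤ ∑ i, (α i * (s * w i) + α i * ((s * w i) ^ 2 / (2 * (1 - c)))) :=
          Finset.sum_le_sum fun i _ => hterm i
      _ = s * μs + s ^ 2 * σn2 / (2 * (1 - c)) := by
          rw [Finset.sum_add_distrib, hμs, hσ, Finset.mul_sum, Finset.mul_sum,
            Finset.sum_div]
          congr 1
          · exact Finset.sum_congr rfl fun i _ => by ring
          · exact Finset.sum_congr rfl fun i _ => by ring
  have hfinal : -s * (μs + t) + (s * μs + s ^ 2 * σn2 / (2 * (1 - c))) =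
      -t ^ 2 / (2 * D) := by
    rw [h1c, hsdef]
    field_simp
    ring
  -- put everything together
  have hreal : (P {ω | μs + t ≤ ∑ i, w i * (Y i ω : ℝ)}).toReal ≤
      Real.exp (-t ^ 2 / (2 * D)) := by
    rw [hsetX]
    refine hcher.trans ?_
    rw [hmgfsum, ← Real.exp_add, ← hfinal]
    apply Real.exp_le_exp.2
    linarith
  calc P {ω | μs + t ≤ ∑ i, w i * (Y i ω : ℝ)}
      = ENNReal.ofReal ((P {ω | μs + t ≤ ∑ i, w i * (Y i ω : ℝ)}).toReal) :=
        (ENNReal.ofReal_toReal (measure_ne_top _ _)).symm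
    _ ≤ ENNReal.ofReal (Real.exp (-t ^ 2 / (2 * D))) := ENNReal.ofReal_le_ofReal hreal
end

section
/- Let Y₁, …, Y_n be independent random variables with Y_i ∼ Poisson(α_i) for α_i > 0, and let w₁, …, w_n ∈ ℝ be not all zero. Set σ_n² = Σ_{i=1}^n w_i² α_i and w_M = max_{1 ≤ i ≤ n} |w_i|. Then for every t with 0 ≤ t ≤ 2σ_n²/(3 w_M), one has P( Σ_{i=1}^n w_i Y_i ≤ Σ_{i=1}^n w_i α_i − t ) ≤ exp( − t² / (2(σ_n² + w_M t / 3)) ). -/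
open MeasureTheory ProbabilityTheory

open Real
open scoped Nat NNReal ENNReal


lemma fact_aux (n : ℕ) : 2 * 3 ^ n ≤ (n + 2)! := by
  induction n with
  | zero => simp [Nat.factorial]
  | succ k ih =>
      have : (k + 3)! = (k + 3) * (k + 2)! := rfl
      calc 2 * 3 ^ (k + 1) = 3 * (2 * 3 ^ k) := by ring
        _ ≤ 3 * (k + 2)! := by omega
        _ ≤ (k + 3) * (k + 2)! := by
            exact Nat.mul_le_mul_right _ (by omega)
        _ = (k + 3)! := rfl

lemma exp_bernstein {y c : ℝ} (hy : |y| ≤ c) (hc : c < 3) :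
    Real.exp y - 1 - y ≤ y ^ 2 / 2 * (1 - c / 3)⁻¹ := by
  have hc0 : 0 ≤ c := (abs_nonneg y).trans hy
  have hsum : HasSum (fun n : ℕ => y ^ n / n !) (Real.exp y) := by
    rw [Real.exp_eq_exp_ℝ]; exact NormedSpace.expSeries_div_hasSum_exp y
  have hsum2 : HasSum (fun n : ℕ => y ^ (n + 2) / (n + 2)!)
      (Real.exp y - (1 + y)) := by
    have h := (hasSum_nat_add_iff' 2).mpr hsum
    simpa [Finset.sum_range_succ] using h
  have hgeo : HasSum (fun n : ℕ => y ^ 2 / 2 * (c / 3) ^ n)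
      (y ^ 2 / 2 * (1 - c / 3)⁻¹) :=
    (hasSum_geometric_of_lt_one (by positivity) (by linarith)).mul_left _
  have hterm : ∀ n : ℕ, y ^ (n + 2) / (n + 2)! ≤ y ^ 2 / 2 * (c / 3) ^ n := by
    intro n
    have h1 : y ^ (n + 2) ≤ |y| ^ (n + 2) := by
      rw [← abs_pow]; exact le_abs_self _
    have h2 : |y| ^ (n + 2) ≤ c ^ n * y ^ 2 := by
      have : |y| ^ (n + 2) = |y| ^ n * y ^ 2 := by
        rw [pow_add, sq_abs]
      rw [this]
      gcongr
    have h3 : (2 * 3 ^ n : ℝ) ≤ ((n + 2)! : ℝ) := by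
      exact_mod_cast fact_aux n
    have hpos : (0:ℝ) < 2 * 3 ^ n := by positivity
    calc y ^ (n + 2) / (n + 2)! ≤ (c ^ n * y ^ 2) / (n + 2)! := by
          gcongr; exact h1.trans h2
      _ ≤ (c ^ n * y ^ 2) / (2 * 3 ^ n) := by
          gcongr
      _ = y ^ 2 / 2 * (c / 3) ^ n := by
          rw [div_pow]; field_simp
  have := hasSum_le hterm hsum2 hgeo
  linarith


lemma poissonPMF_toReal (r : ℝ≥0) (k : ℕ) :
    ((poissonPMF r) k).toReal = Real.exp (-r) * (r : ℝ) ^ k / k ! := by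
  have h : (poissonPMF r) k = ENNReal.ofReal (poissonPMFReal r k) := rfl
  rw [h, ENNReal.toReal_ofReal poissonPMFReal_nonneg, poissonPMFReal]

lemma poisson_exp (r : ℝ≥0) (θ : ℝ) :
    Integrable (fun k : ℕ => Real.exp (θ * k)) (poissonMeasure r) ∧
    ∫ k : ℕ, Real.exp (θ * k) ∂(poissonMeasure r)
      = Real.exp (r * (Real.exp θ - 1)) := by
  have hsum : HasSum (fun k : ℕ => ((r : ℝ) * Real.exp θ) ^ k / k !)
      (Real.exp ((r : ℝ) * Real.exp θ)) := by
    rw [Real.exp_eq_exp_ℝ]; exact NormedSpace.expSeries_div_hasSum_exp _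
  have hsum2 : HasSum
      (fun k : ℕ => Real.exp (-r) * (((r : ℝ) * Real.exp θ) ^ k / k !))
      (Real.exp (-r) * Real.exp ((r : ℝ) * Real.exp θ)) := hsum.mul_left _
  have hval : Real.exp (-r) * Real.exp ((r : ℝ) * Real.exp θ)
      = Real.exp (r * (Real.exp θ - 1)) := by
    rw [← Real.exp_add]; ring_nf
  have hterm : ∀ k : ℕ,
      ((poissonPMF r) k).toReal * Real.exp (θ * k)
        = Real.exp (-r) * (((r : ℝ) * Real.exp θ) ^ k / k !) := by
    intro k
    rw [poissonPMF_toReal, mul_pow, ← Real.exp_nat_mul]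
    ring_nf
  have hint : Integrable (fun k : ℕ => Real.exp (θ * k)) (poissonMeasure r) := by
    refine ⟨(by measurability : Measurable fun k : ℕ => Real.exp (θ * k)).aestronglyMeasurable, ?_⟩
    rw [hasFiniteIntegral_iff_norm]
    have hl : ∫⁻ k : ℕ, ENNReal.ofReal ‖Real.exp (θ * k)‖ ∂(poissonMeasure r)
        = ∑' k : ℕ, ENNReal.ofReal ‖Real.exp (θ * k)‖ * poissonMeasure r {k} :=
      lintegral_countable' _
    rw [hl]
    have hsing : ∀ k : ℕ, poissonMeasure r {k} = (poissonPMF r) k := fun k =>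
      by rw [poissonMeasure_singleton]; rfl
    have heq : ∀ k : ℕ, ENNReal.ofReal ‖Real.exp (θ * k)‖ * poissonMeasure r {k}
        = ENNReal.ofReal (Real.exp (-r) * (((r : ℝ) * Real.exp θ) ^ k / k !)) := by
      intro k
      rw [hsing k]
      have h2 : (poissonPMF r) k = ENNReal.ofReal (poissonPMFReal r k) := rfl
      rw [h2, Real.norm_eq_abs, abs_of_pos (Real.exp_pos _),
        ← ENNReal.ofReal_mul (Real.exp_pos _).le]
      congr 1
      have := hterm k
      rw [poissonPMF_toReal] at this
      rw [← this, poissonPMFReal]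
      ring
    rw [tsum_congr heq]
    rw [← ENNReal.ofReal_tsum_of_nonneg (fun k => by positivity) hsum2.summable]
    exact ENNReal.ofReal_lt_top
  refine ⟨hint, ?_⟩
  have hPM : poissonMeasure r = (poissonPMF r).toMeasure := Measure.ext_iff_singleton.mpr fun k => by
    rw [poissonMeasure_singleton, PMF.toMeasure_apply_singleton _ _ (measurableSet_singleton k)]; rfl
  rw [show poissonMeasure r = (poissonPMF r).toMeasure from hPM,
    PMF.integral_eq_tsum _ _ (by rwa [show (poissonPMF r).toMeasure = poissonMeasure r from hPM.symm])]
  rw [← hval, ← hsum2.tsum_eq]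
  exact tsum_congr fun k => by rw [smul_eq_mul, hterm k]
lemma poisson_transfer {Ω : Type*} [MeasurableSpace Ω] (P : Measure Ω)
    (Y : Ω → ℕ) (hY : Measurable Y) (r : ℝ≥0)
    (h : P.map Y = poissonMeasure r) (θ : ℝ) :
    Integrable (fun ω => Real.exp (θ * Y ω)) P ∧
    ∫ ω, Real.exp (θ * Y ω) ∂P = Real.exp (r * (Real.exp θ - 1)) := by
  have hg : Measurable fun k : ℕ => Real.exp (θ * k) := by measurability
  constructor
  · have hi := (poisson_exp r θ).1
    rw [← h] at hi
    exact (integrable_map_measure hg.aestronglyMeasurable hY.aemeasurable).mp hi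
  · have : (∫ k : ℕ, Real.exp (θ * k) ∂(P.map Y)) = ∫ ω, Real.exp (θ * Y ω) ∂P :=
      integral_map hY.aemeasurable hg.aestronglyMeasurable
    rw [← this, h]
    exact (poisson_exp r θ).2

/-- Bernstein-type lower tail bound for weighted sums of independent Poisson
random variables. -/
theorem stmt6
    {Ω : Type*} [MeasurableSpace Ω] (P : Measure Ω) [IsProbabilityMeasure P]
    (n : ℕ) (hn : 0 < n)
    (α w : Fin n → ℝ) (hα : ∀ i, 0 < α i) (hw : ∃ i, w i ≠ 0)
    (Y : Fin n → Ω → ℕ) (hmeas : ∀ i, Measurable (Y i))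
    (hlaw : ∀ i, P.map (Y i) = poissonMeasure (Real.toNNReal (α i)))
    (hindep : iIndepFun Y P)
    (σn2 wM : ℝ)
    (hσ : σn2 = ∑ i, w i ^ 2 * α i)
    (hwM : IsGreatest (Set.range fun i => |w i|) wM)
    (t : ℝ) (ht0 : 0 ≤ t) (ht : t ≤ 2 * σn2 / (3 * wM)) :
    P {ω | ∑ i, w i * (Y i ω : ℝ) ≤ ∑ i, w i * α i - t} ≤
      ENNReal.ofReal (Real.exp (-t ^ 2 / (2 * (σn2 + wM * t / 3)))) := by
  obtain ⟨i0, hi0⟩ := hw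
  have hwMb : ∀ i, |w i| ≤ wM := fun i => hwM.2 ⟨i, rfl⟩
  have hwM0 : 0 < wM := lt_of_lt_of_le (abs_pos.mpr hi0) (hwMb i0)
  have hσpos : 0 < σn2 := by
    rw [hσ]
    have h1 : 0 < w i0 ^ 2 * α i0 := by
      have := hα i0; positivity
    refine lt_of_lt_of_le h1 (Finset.single_le_sum (f := fun i => w i ^ 2 * α i) (fun i _ => ?_) (Finset.mem_univ i0))
    have := (hα i).le; positivity
  set D : ℝ := σn2 + wM * t / 3 with hD
  have hDpos : 0 < D := by positivity
  set s : ℝ := t / D with hs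
  have hs0 : 0 ≤ s := div_nonneg ht0 hDpos.le
  have hK : 1 - s * wM / 3 = σn2 / D := by
    rw [hs, hD]; field_simp; ring
  have hc3 : s * wM < 3 := by
    have : (0:ℝ) < σn2 / D := div_pos hσpos hDpos
    linarith [hK ▸ this]
  -- the weighted variables
  set X : Fin n → Ω → ℝ := fun i ω => w i * (Y i ω : ℝ) with hX
  have hXmeas : ∀ i, Measurable (X i) := fun i =>
    measurable_const.mul ((measurable_from_top).comp (hmeas i))
  have hXind : iIndepFun X P := by
    exact hindep.comp (fun i (k : ℕ) => w i * (k : ℝ))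
      (fun i => measurable_const.mul measurable_from_top)
  have hcoe : ∀ i, ((Real.toNNReal (α i) : ℝ≥0) : ℝ) = α i :=
    fun i => Real.coe_toNNReal _ (hα i).le
  have hPT : ∀ i, Integrable (fun ω => Real.exp ((-s * w i) * Y i ω)) P ∧
      ∫ ω, Real.exp ((-s * w i) * Y i ω) ∂P
        = Real.exp (α i * (Real.exp (-s * w i) - 1)) := by
    intro i
    have h := poisson_transfer P (Y i) (hmeas i) (Real.toNNReal (α i)) (hlaw i) (-s * w i)
    rw [hcoe i] at h
    exact h
  have hint : ∀ i, Integrable (fun ω => Real.exp (-s * X i ω)) P := by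
    intro i
    have := (hPT i).1
    simpa [hX, mul_assoc] using this
  have hmgf : ∀ i, mgf (X i) P (-s) = Real.exp (α i * (Real.exp (-s * w i) - 1)) := by
    intro i
    rw [mgf]
    rw [← (hPT i).2]
    congr 1 with ω
    simp [hX]; ring_nf
  have hIntSum : Integrable (fun ω => Real.exp (-s * (∑ i, X i) ω)) P :=
    hXind.integrable_exp_mul_sum hXmeas (fun i _ => hint i)
  have key := measure_le_le_exp_mul_mgf (μ := P) (X := ∑ i, X i)
    (∑ i, w i * α i - t) (by linarith : -s ≤ 0) hIntSum
  rw [hXind.mgf_sum hXmeas] at key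
  have hprod : ∏ i, mgf (X i) P (-s)
      = Real.exp (∑ i, α i * (Real.exp (-s * w i) - 1)) := by
    rw [Real.exp_sum]
    exact Finset.prod_congr rfl fun i _ => hmgf i
  rw [hprod] at key
  -- the analytic estimate on the exponent
  have hexp : Real.exp (-(-s) * (∑ i, w i * α i - t)) *
      Real.exp (∑ i, α i * (Real.exp (-s * w i) - 1))
      ≤ Real.exp (-t ^ 2 / (2 * (σn2 + wM * t / 3))) := by
    rw [← Real.exp_add, Real.exp_le_exp]
    have hterm : ∀ i ∈ Finset.univ, α i * (Real.exp (-s * w i) - 1)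
        ≤ α i * (-s * w i) + α i * ((s * w i) ^ 2 / 2 * (σn2 / D)⁻¹) := by
      intro i _
      have hy : |(-s) * w i| ≤ s * wM := by
        rw [abs_mul, abs_neg, abs_of_nonneg hs0]
        exact mul_le_mul_of_nonneg_left (hwMb i) hs0
      have hb := exp_bernstein hy hc3
      rw [hK] at hb
      have h2 := mul_le_mul_of_nonneg_left hb (hα i).le
      nlinarith [h2]
    have hsum := Finset.sum_le_sum hterm
    have hrw : ∑ i, (α i * (-s * w i) + α i * ((s * w i) ^ 2 / 2 * (σn2 / D)⁻¹))
        = -s * (∑ i, w i * α i) + s ^ 2 * (σn2 / D)⁻¹ / 2 * σn2 := by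
      rw [Finset.sum_add_distrib, hσ, Finset.mul_sum, Finset.mul_sum]
      congr 1
      · exact Finset.sum_congr rfl fun i _ => by ring
      · exact Finset.sum_congr rfl fun i _ => by ring
    rw [hrw] at hsum
    have hfinal : -(-s) * (∑ i, w i * α i - t) +
        (-s * (∑ i, w i * α i) + s ^ 2 * (σn2 / D)⁻¹ / 2 * σn2)
        = -t ^ 2 / (2 * (σn2 + wM * t / 3)) := by
      rw [hs, hD]
      field_simp
      ring
    linarith [hsum, hfinal.le, hfinal.ge]
  have hset : {ω | ∑ i, w i * (Y i ω : ℝ) ≤ ∑ i, w i * α i - t}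
      = {ω | (∑ i, X i) ω ≤ ∑ i, w i * α i - t} := by
    ext ω; simp [hX, Finset.sum_apply]
  rw [hset]
  calc P {ω | (∑ i, X i) ω ≤ ∑ i, w i * α i - t}
      = ENNReal.ofReal (P {ω | (∑ i, X i) ω ≤ ∑ i, w i * α i - t}).toReal :=
        (ENNReal.ofReal_toReal (measure_ne_top P _)).symm
    _ ≤ ENNReal.ofReal (Real.exp (-t ^ 2 / (2 * (σn2 + wM * t / 3)))) :=
        ENNReal.ofReal_le_ofReal (key.trans hexp)
end

section
/- Let 0 < x_min ≤ x_max, α > 0, and let x, c ∈ ℝ^n have all coordinates in [x_min, x_max]. Then (x_min² / (2 x_max³)) · α ‖x − c‖₂² ≤ Σ_{i=1}^n ( α(c_i − x_i) + α x_i ln(x_i / c_i) ) ≤ (x_max² / (2 x_min³)) · α ‖x − c‖₂², where the middle expression equals the Kullback–Leibler divergence between the product of Poisson distributions with means α x_i and the product of Poisson distributions with means α c_i. -/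
open Real Set

private lemma klF_hasDeriv (a r t : ℝ) (ht : t ≠ 0) (hr : r ≠ 0) :
    HasDerivAt (fun s => s - a + a * (Real.log a - Real.log s) - (a - s) ^ 2 / (2 * r))
      (1 - a / t - (t - a) / r) t := by
  have h1 : HasDerivAt (fun s : ℝ => s - a) 1 t := (hasDerivAt_id t).sub_const a
  have h2 : HasDerivAt (fun s : ℝ => a * (Real.log a - Real.log s)) (a * (0 - 1 / t)) t :=
    by simpa using ((hasDerivAt_const t (Real.log a)).sub (Real.hasDerivAt_log ht)).const_mul a
  have h3 : HasDerivAt (fun s : ℝ => (a - s) ^ 2 / (2 * r))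
      ((↑2 * (a - t) ^ 1 * (0 - 1)) / (2 * r)) t := by
    exact (((hasDerivAt_const t a).sub (hasDerivAt_id t)).pow 2).div_const (2 * r)
  have := (h1.add h2).sub h3
  refine this.congr_deriv ?_
  field_simp
  ring

private lemma kl_mvt (a b r : ℝ) (ha0 : 0 < a) (hb0 : 0 < b) (hab : a ≠ b) (hr : r ≠ 0) :
    ∃ ξ, min a b < ξ ∧ ξ < max a b ∧
      b - a + a * (Real.log a - Real.log b) - (a - b) ^ 2 / (2 * r)
        = (ξ - a) * (1 / ξ - 1 / r) * (b - a) := by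
  set F : ℝ → ℝ := fun s => s - a + a * (Real.log a - Real.log s) - (a - s) ^ 2 / (2 * r)
    with hF
  have hFa : F a = 0 := by simp [hF]
  rcases lt_or_gt_of_ne hab with h | h
  · have hcont : ContinuousOn F (Icc a b) := fun t ht => by
      have ht0 : t ≠ 0 := (lt_of_lt_of_le ha0 ht.1).ne'
      exact (klF_hasDeriv a r t ht0 hr).continuousAt.continuousWithinAt
    have hderiv : ∀ t ∈ Ioo a b, HasDerivAt F (1 - a / t - (t - a) / r) t := fun t ht =>
      klF_hasDeriv a r t (ha0.trans ht.1).ne' hr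
    obtain ⟨ξ, hξ, heq⟩ := exists_hasDerivAt_eq_slope F _ h hcont hderiv
    refine ⟨ξ, by simpa [min_eq_left h.le] using hξ.1, by simpa [max_eq_right h.le] using hξ.2, ?_⟩
    have hξ0 : ξ ≠ 0 := (ha0.trans hξ.1).ne'
    have hne : b - a ≠ 0 := sub_ne_zero.2 h.ne'
    rw [eq_div_iff hne, hFa, sub_zero] at heq
    have hd : (1 - a / ξ - (ξ - a) / r) = (ξ - a) * (1 / ξ - 1 / r) := by
      field_simp
    have : F b = (ξ - a) * (1 / ξ - 1 / r) * (b - a) := by rw [← hd]; linarith [heq]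
    simpa [hF] using this
  · have hcont : ContinuousOn F (Icc b a) := fun t ht => by
      have ht0 : t ≠ 0 := (lt_of_lt_of_le hb0 ht.1).ne'
      exact (klF_hasDeriv a r t ht0 hr).continuousAt.continuousWithinAt
    have hderiv : ∀ t ∈ Ioo b a, HasDerivAt F (1 - a / t - (t - a) / r) t := fun t ht =>
      klF_hasDeriv a r t (hb0.trans ht.1).ne' hr
    obtain ⟨ξ, hξ, heq⟩ := exists_hasDerivAt_eq_slope F _ h hcont hderiv
    refine ⟨ξ, by simpa [min_eq_right h.le] using hξ.1, by simpa [max_eq_left h.le] using hξ.2, ?_⟩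
    have hξ0 : ξ ≠ 0 := (hb0.trans hξ.1).ne'
    have hne : a - b ≠ 0 := sub_ne_zero.2 hab
    rw [eq_div_iff hne, hFa] at heq
    have hd : (1 - a / ξ - (ξ - a) / r) = (ξ - a) * (1 / ξ - 1 / r) := by
      field_simp
    have : F b = (ξ - a) * (1 / ξ - 1 / r) * (b - a) := by
      rw [← hd]; linear_combination heq
    simpa [hF] using this

private lemma kl_upper (m a b : ℝ) (hm : 0 < m) (ha : m ≤ a) (hb : m ≤ b) :
    b - a + a * Real.log (a / b) ≤ (a - b) ^ 2 / (2 * m) := by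
  have ha0 : 0 < a := hm.trans_le ha
  have hb0 : 0 < b := hm.trans_le hb
  rw [Real.log_div ha0.ne' hb0.ne']
  rcases eq_or_ne a b with rfl | hab
  · simp
  obtain ⟨ξ, h1, h2, heq⟩ := kl_mvt a b m ha0 hb0 hab hm.ne'
  have hmξ : m < ξ := lt_of_le_of_lt (le_min ha hb) h1
  have hξ0 : 0 < ξ := hm.trans hmξ
  have hinv : 1 / ξ - 1 / m ≤ 0 := by
    have := one_div_le_one_div_of_le hm hmξ.le
    linarith
  have hsign : 0 ≤ (ξ - a) * (b - a) := by
    rcases lt_or_gt_of_ne hab with h | h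
    · have : a < ξ := by simpa [min_eq_left h.le] using h1
      nlinarith
    · have : ξ < a := by simpa [max_eq_left h.le] using h2
      nlinarith
  nlinarith [mul_nonpos_of_nonneg_of_nonpos hsign hinv]

private lemma kl_lower (M a b : ℝ) (ha0 : 0 < a) (hb0 : 0 < b) (ha : a ≤ M) (hb : b ≤ M) :
    (a - b) ^ 2 / (2 * M) ≤ b - a + a * Real.log (a / b) := by
  have hM : 0 < M := ha0.trans_le ha
  rw [Real.log_div ha0.ne' hb0.ne']
  rcases eq_or_ne a b with rfl | hab
  · simp
  obtain ⟨ξ, h1, h2, heq⟩ := kl_mvt a b M ha0 hb0 hab hM.ne'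
  have hξM : ξ < M := lt_of_lt_of_le h2 (max_le ha hb)
  have hξ0 : 0 < ξ := lt_of_le_of_lt (le_min ha0.le hb0.le) h1
  have hinv : 0 ≤ 1 / ξ - 1 / M := by
    have := one_div_le_one_div_of_le hξ0 hξM.le
    linarith
  have hsign : 0 ≤ (ξ - a) * (b - a) := by
    rcases lt_or_gt_of_ne hab with h | h
    · have : a < ξ := by simpa [min_eq_left h.le] using h1
      nlinarith
    · have : ξ < a := by simpa [max_eq_left h.le] using h2
      nlinarith
  nlinarith [mul_nonneg hsign hinv]

private lemma pointwise_low (m M a b : ℝ) (hm : 0 < m) (hmM : m ≤ M)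
    (ha : a ∈ Set.Icc m M) (hb : b ∈ Set.Icc m M) :
    m ^ 2 / (2 * M ^ 3) * (a - b) ^ 2 ≤ b - a + a * Real.log (a / b) := by
  have hM : 0 < M := hm.trans_le hmM
  have key := kl_lower M a b (hm.trans_le ha.1) (hm.trans_le hb.1) ha.2 hb.2
  have comp : m ^ 2 / (2 * M ^ 3) * (a - b) ^ 2 ≤ (a - b) ^ 2 / (2 * M) := by
    rw [div_mul_eq_mul_div, div_le_div_iff₀ (by positivity) (by positivity)]
    nlinarith [sq_nonneg (a - b), mul_pos hM hM, sq_nonneg (M - m),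
      mul_nonneg (mul_nonneg (sq_nonneg (a - b)) hM.le) (sub_nonneg.2 hmM)]
  linarith

private lemma pointwise_high (m M a b : ℝ) (hm : 0 < m) (hmM : m ≤ M)
    (ha : a ∈ Set.Icc m M) (hb : b ∈ Set.Icc m M) :
    b - a + a * Real.log (a / b) ≤ M ^ 2 / (2 * m ^ 3) * (a - b) ^ 2 := by
  have hM : 0 < M := hm.trans_le hmM
  have key := kl_upper m a b hm ha.1 hb.1
  have comp : (a - b) ^ 2 / (2 * m) ≤ M ^ 2 / (2 * m ^ 3) * (a - b) ^ 2 := by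
    rw [div_mul_eq_mul_div, div_le_div_iff₀ (by positivity) (by positivity)]
    nlinarith [sq_nonneg (a - b), sq_nonneg (M - m),
      mul_nonneg (mul_nonneg (sq_nonneg (a - b)) hm.le) (sub_nonneg.2 hmM)]
  linarith

/-- Two-sided bounds relating the KL divergence between products of Poisson
distributions with means `α * x i` and `α * c i` to the squared Euclidean distance. -/
theorem stmt10 (n : ℕ) (xmin xmax α : ℝ) (h0 : 0 < xmin) (hmm : xmin ≤ xmax) (hα : 0 < α)
    (x c : EuclideanSpace ℝ (Fin n))
    (hx : ∀ i, x i ∈ Set.Icc xmin xmax) (hc : ∀ i, c i ∈ Set.Icc xmin xmax) :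
    xmin ^ 2 / (2 * xmax ^ 3) * (α * ‖x - c‖ ^ 2) ≤
        ∑ i, (α * (c i - x i) + α * x i * Real.log (x i / c i)) ∧
      ∑ i, (α * (c i - x i) + α * x i * Real.log (x i / c i)) ≤
        xmax ^ 2 / (2 * xmin ^ 3) * (α * ‖x - c‖ ^ 2) := by
  have hnorm : ‖x - c‖ ^ 2 = ∑ i, (x i - c i) ^ 2 := by
    rw [EuclideanSpace.norm_eq, Real.sq_sqrt (by positivity)]
    refine Finset.sum_congr rfl fun i _ => ?_
    simp [Real.norm_eq_abs, sq_abs, PiLp.sub_apply]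
  constructor
  · rw [hnorm]
    simp only [Finset.mul_sum]
    apply Finset.sum_le_sum
    intro i _
    have hpt := pointwise_low xmin xmax (x i) (c i) h0 hmm (hx i) (hc i)
    calc xmin ^ 2 / (2 * xmax ^ 3) * (α * (x i - c i) ^ 2)
        = α * (xmin ^ 2 / (2 * xmax ^ 3) * (x i - c i) ^ 2) := by ring
      _ ≤ α * (c i - x i + x i * Real.log (x i / c i)) :=
          mul_le_mul_of_nonneg_left hpt hα.le
      _ = α * (c i - x i) + α * x i * Real.log (x i / c i) := by ring
  · rw [hnorm]
    simp only [Finset.mul_sum]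
    apply Finset.sum_le_sum
    intro i _
    have hpt := pointwise_high xmin xmax (x i) (c i) h0 hmm (hx i) (hc i)
    calc α * (c i - x i) + α * x i * Real.log (x i / c i)
        = α * (c i - x i + x i * Real.log (x i / c i)) := by ring
      _ ≤ α * (xmax ^ 2 / (2 * xmin ^ 3) * (x i - c i) ^ 2) :=
          mul_le_mul_of_nonneg_left hpt hα.le
      _ = xmax ^ 2 / (2 * xmin ^ 3) * (α * (x i - c i) ^ 2) := by ring
end

section
/- Let 1 ≤ k < n be integers and let 0 < δ ≤ k/n. Then there exists a finite set C ⊂ ℝ^n with log₂ |C| ≤ (k/2) log₂(k/(nδ)) + k log₂(n/k) + log₂ k + k(log₂ e + 1) such that for every x ∈ ℝ^n with at most k nonzero coordinates and ‖x‖_∞ ≤ 1, there exists c ∈ C with ‖x − c‖₂² ≤ nδ. -/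
set_option maxHeartbeats 1000000

lemma quant_aux (m : ℕ) (hm : 1 ≤ m) (t : ℝ) (ht : |t| ≤ 1) :
    |t - (-1 + (2 * (min ⌊(t + 1) * m / 2⌋₊ (m - 1) : ℕ) + 1) / m)| ≤ 1 / m := by
  have hm0 : (0:ℝ) < m := by exact_mod_cast hm
  set u : ℝ := (t + 1) * m / 2 with hu
  have ht1 : -1 ≤ t := (abs_le.mp ht).1
  have ht2 : t ≤ 1 := (abs_le.mp ht).2
  have hu0 : 0 ≤ u := by
    have : 0 ≤ (t + 1) * m := mul_nonneg (by linarith) hm0.le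
    rw [hu]; linarith
  have hum : u ≤ m := by
    have : (t + 1) * m ≤ 2 * m := by nlinarith
    rw [hu]; linarith
  set j : ℕ := min ⌊u⌋₊ (m - 1) with hj
  have hj_le : (j : ℝ) ≤ u := by
    have h1 : (j : ℕ) ≤ ⌊u⌋₊ := min_le_left _ _
    calc (j : ℝ) ≤ (⌊u⌋₊ : ℝ) := by exact_mod_cast h1
      _ ≤ u := Nat.floor_le hu0
  have hj_ge : u - 1 ≤ (j : ℝ) := by
    rcases le_or_gt ⌊u⌋₊ (m - 1) with h | h
    · have : j = ⌊u⌋₊ := min_eq_left h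
      rw [this]
      have := Nat.lt_floor_add_one u
      linarith
    · have : j = m - 1 := min_eq_right h.le
      rw [this]
      have : ((m - 1 : ℕ) : ℝ) = (m : ℝ) - 1 := by
        push_cast [Nat.cast_sub hm]; ring
      rw [this]; linarith
  have htu : t = -1 + 2 * u / m := by rw [hu]; field_simp; ring
  have key : t - (-1 + (2 * (j:ℝ) + 1) / m) = (2 * u - 2 * (j:ℝ) - 1) / m := by
    rw [htu]; field_simp; ring
  rw [key, abs_div, abs_of_pos hm0]
  have habs : |2 * u - 2 * (j:ℝ) - 1| ≤ 1 := by
    rw [abs_le]; constructor <;> linarith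
  exact div_le_div_of_nonneg_right habs hm0.le

/-- Existence of a lossy compression codebook for `k`-sparse vectors with entries
bounded by `1`, achieving per-symbol distortion `δ` with the stated rate bound. -/
theorem stmt11 (n k : ℕ) (hk : 1 ≤ k) (hkn : k < n) (δ : ℝ) (hδ : 0 < δ)
    (hδk : δ ≤ (k : ℝ) / n) :
    ∃ C : Finset (EuclideanSpace ℝ (Fin n)),
      Real.logb 2 C.card ≤ (k / 2 : ℝ) * Real.logb 2 (k / (n * δ)) +
          k * Real.logb 2 ((n : ℝ) / k) + Real.logb 2 k +
          k * (Real.logb 2 (Real.exp 1) + 1) ∧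
      ∀ x : EuclideanSpace ℝ (Fin n),
        {i | x i ≠ 0}.ncard ≤ k → (∀ i, |x i| ≤ 1) →
        ∃ c ∈ C, ‖x - c‖ ^ 2 ≤ n * δ := by
  classical
  have hn0 : 0 < n := lt_trans (Nat.lt_of_lt_of_le Nat.zero_lt_one hk) hkn
  have hn0' : (0:ℝ) < n := by exact_mod_cast hn0
  have hk0' : (0:ℝ) < k := by exact_mod_cast hk
  have hnδ : (0:ℝ) < n * δ := mul_pos hn0' hδ
  have hnδk : (n:ℝ) * δ ≤ k := by
    have := (le_div_iff₀ hn0').mp hδk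
    linarith [this]
  have hratio1 : (1:ℝ) ≤ (k:ℝ) / (n * δ) := (one_le_div hnδ).mpr hnδk
  set r : ℝ := Real.sqrt ((k:ℝ) / (n * δ)) with hr
  have hr1 : 1 ≤ r := by
    rw [hr, show (1:ℝ) = Real.sqrt 1 from (Real.sqrt_one).symm]
    exact Real.sqrt_le_sqrt hratio1
  have hr0 : 0 < r := lt_of_lt_of_le one_pos hr1
  set m : ℕ := ⌈r⌉₊ with hmdef
  have hm1 : 1 ≤ m := Nat.one_le_ceil_iff.mpr hr0
  have hm0' : (0:ℝ) < m := by exact_mod_cast hm1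
  have hrm : r ≤ m := Nat.le_ceil r
  have hm2r : (m:ℝ) ≤ 2 * r := by
    have := Nat.ceil_lt_add_one hr0.le
    rw [hmdef]; linarith
  set q : ℕ → ℝ := fun j => -1 + (2 * j + 1) / m with hq
  set C : Finset (EuclideanSpace ℝ (Fin n)) :=
    (Finset.powersetCard k (Finset.univ : Finset (Fin n))).biUnion
      (fun S => (S.pi (fun _ => (Finset.univ : Finset (Fin m)))).image
        (fun g => (WithLp.toLp 2 (fun i => if h : i ∈ S then q (g i h) else 0) : EuclideanSpace ℝ (Fin n))))
    with hC
  -- covering property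
  have hcover : ∀ x : EuclideanSpace ℝ (Fin n),
      {i | x i ≠ 0}.ncard ≤ k → (∀ i, |x i| ≤ 1) →
      ∃ c ∈ C, ‖x - c‖ ^ 2 ≤ n * δ := by
    intro x hx hx1
    set s0 : Finset (Fin n) := Finset.univ.filter (fun i => x i ≠ 0) with hs0
    have hs0card : s0.card ≤ k := by
      have hset : {i | x i ≠ 0} = (s0 : Set (Fin n)) := by ext i; simp [hs0]
      rw [hset, Set.ncard_coe_finset] at hx
      exact hx
    obtain ⟨S, hS0, -, hScard⟩ :=
      Finset.exists_subsuperset_card_eq (s0.subset_univ) hs0card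
        (by simpa using hkn.le)
    set g : (i : Fin n) → i ∈ S → Fin m :=
      fun i _ => ⟨min ⌊(x i + 1) * m / 2⌋₊ (m - 1), by omega⟩ with hg
    set c : EuclideanSpace ℝ (Fin n) :=
      WithLp.toLp 2 (fun i => if h : i ∈ S then q (g i h) else 0) with hc
    have hcC : c ∈ C := by
      rw [hC]
      refine Finset.mem_biUnion.mpr ⟨S, ?_, ?_⟩
      · exact Finset.mem_powersetCard.mpr ⟨S.subset_univ, hScard⟩
      · exact Finset.mem_image.mpr ⟨g, Finset.mem_pi.mpr (fun i _ => Finset.mem_univ _), rfl⟩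
    refine ⟨c, hcC, ?_⟩
    have hcoord : ∀ i ∈ S, (x i - c i) ^ 2 ≤ (n * δ) / k := by
      intro i hi
      have h1 : |x i - c i| ≤ 1 / m := by
        have := quant_aux m hm1 (x i) (hx1 i)
        simpa [hc, hq, hg, hi] using this
      have h2 : (x i - c i) ^ 2 ≤ (1 / m) ^ 2 := by
        rw [← sq_abs]
        exact pow_le_pow_left₀ (abs_nonneg _) h1 2
      refine h2.trans ?_
      have hm2 : (k:ℝ) / (n * δ) ≤ (m:ℝ) ^ 2 := by
        have hsq := Real.sq_sqrt (le_of_lt (lt_of_lt_of_le zero_lt_one hratio1))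
        calc (k:ℝ) / (n * δ) = r ^ 2 := hsq.symm
          _ ≤ (m:ℝ) ^ 2 := pow_le_pow_left₀ hr0.le hrm 2
      have h3 : (k:ℝ) ≤ (m:ℝ) ^ 2 * (n * δ) := (div_le_iff₀ hnδ).mp hm2
      rw [div_pow, one_pow, div_le_div_iff₀ (by positivity) hk0']
      nlinarith
    have hnorm : ‖x - c‖ ^ 2 = ∑ i, (x i - c i) ^ 2 := by
      rw [EuclideanSpace.norm_eq, Real.sq_sqrt (by positivity)]
      congr 1; ext i
      simp [Real.norm_eq_abs, sq_abs]
    rw [hnorm]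
    have hzero : ∀ i ∈ Finset.univ, i ∉ S → (x i - c i) ^ 2 = 0 := by
      intro i _ hiS
      have hx0 : x i = 0 := by
        by_contra h
        exact hiS (hS0 (by simp [hs0, h]))
      have hc0 : c i = 0 := by rw [hc]; exact dif_neg hiS
      rw [hx0, hc0]; ring
    calc ∑ i, (x i - c i) ^ 2 = ∑ i ∈ S, (x i - c i) ^ 2 :=
          (Finset.sum_subset S.subset_univ hzero).symm
      _ ≤ ∑ _i ∈ S, (n * δ) / k := Finset.sum_le_sum hcoord
      _ = k * ((n * δ) / k) := by rw [Finset.sum_const, hScard, nsmul_eq_mul]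
      _ = n * δ := by field_simp
  refine ⟨C, ?_, hcover⟩
  -- cardinality bound
  have hCcard : C.card ≤ n.choose k * m ^ k := by
    rw [hC]
    refine Finset.card_biUnion_le.trans (le_trans
      (Finset.sum_le_sum (g := fun _ => m ^ k) (fun S hS => ?_)) ?_)
    · refine Finset.card_image_le.trans ?_
      rw [Finset.card_pi]
      simp [Finset.prod_const, (Finset.mem_powersetCard.mp hS).2]
    · rw [Finset.sum_const, smul_eq_mul, Finset.card_powersetCard, Finset.card_univ,
        Fintype.card_fin]
  -- real cardinality bound
  have hfac0 : (0:ℝ) < (k.factorial : ℝ) := by exact_mod_cast k.factorial_pos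
  have step1 : (n.choose k : ℝ) * (k.factorial : ℝ) ≤ (n:ℝ) ^ k := by
    have h := Nat.descFactorial_le_pow n k
    have heq : n.choose k * k.factorial = n.descFactorial k := by
      rw [Nat.descFactorial_eq_factorial_mul_choose]; ring
    exact_mod_cast heq ▸ h
  have step2 : (k:ℝ) ^ k ≤ Real.exp 1 ^ k * (k.factorial : ℝ) := by
    have hsum := Real.sum_le_exp_of_nonneg (x := (k:ℝ)) (by positivity) (k + 1)
    have hterm : (k:ℝ) ^ k / (k.factorial : ℝ) ≤
        ∑ i ∈ Finset.range (k + 1), (k:ℝ) ^ i / (i.factorial : ℝ) :=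
      Finset.single_le_sum (f := fun i => (k:ℝ) ^ i / (i.factorial : ℝ))
        (fun i _ => by positivity) (Finset.self_mem_range_succ k)
    have hexp : Real.exp (k:ℝ) = Real.exp 1 ^ k := by
      rw [← Real.exp_nat_mul, mul_one]
    have := (hterm.trans hsum)
    rw [hexp, div_le_iff₀ hfac0] at this
    linarith
  have hchoose : (n.choose k : ℝ) ≤ ((n:ℝ) / k) ^ k * Real.exp 1 ^ k := by
    have hnk : (n:ℝ) ^ k = ((n:ℝ) / k) ^ k * (k:ℝ) ^ k := by
      rw [div_pow]; field_simp
    have h2 : ((n:ℝ) / k) ^ k * (k:ℝ) ^ k ≤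
        ((n:ℝ) / k) ^ k * (Real.exp 1 ^ k * (k.factorial : ℝ)) :=
      mul_le_mul_of_nonneg_left step2 (by positivity)
    have h3 : (n.choose k : ℝ) * (k.factorial : ℝ) ≤
        (((n:ℝ) / k) ^ k * Real.exp 1 ^ k) * (k.factorial : ℝ) := by
      calc (n.choose k : ℝ) * (k.factorial : ℝ) ≤ (n:ℝ) ^ k := step1
        _ = ((n:ℝ) / k) ^ k * (k:ℝ) ^ k := hnk
        _ ≤ (((n:ℝ) / k) ^ k * Real.exp 1 ^ k) * (k.factorial : ℝ) := by
            rw [mul_assoc]; exact h2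
    exact le_of_mul_le_mul_right h3 hfac0
  set B : ℝ := ((n:ℝ) / k) ^ k * Real.exp 1 ^ k * (2 * r) ^ k with hB
  have hCB : (C.card : ℝ) ≤ B := by
    calc (C.card : ℝ) ≤ (n.choose k : ℝ) * (m:ℝ) ^ k := by exact_mod_cast hCcard
      _ ≤ (((n:ℝ) / k) ^ k * Real.exp 1 ^ k) * (2 * r) ^ k := by
          apply mul_le_mul hchoose (pow_le_pow_left₀ hm0'.le hm2r k) (by positivity)
            (by positivity)
      _ = B := by rw [hB]
  have hCpos : (0:ℝ) < C.card := by
    obtain ⟨c, hc, -⟩ := hcover 0 (by simp) (fun i => by simp)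
    have : 0 < C.card := Finset.card_pos.mpr ⟨c, hc⟩
    exact_mod_cast this
  have hlogle : Real.logb 2 C.card ≤ Real.logb 2 B :=
    Real.logb_le_logb_of_le one_lt_two hCpos hCB
  refine hlogle.trans ?_
  have hnk0 : (0:ℝ) < (n:ℝ) / k := by positivity
  have hlogB : Real.logb 2 B = k * Real.logb 2 ((n:ℝ) / k) + k * Real.logb 2 (Real.exp 1)
      + k * (1 + Real.logb 2 r) := by
    rw [hB, Real.logb_mul (by positivity) (by positivity),
        Real.logb_mul (by positivity) (by positivity),
        Real.logb_pow, Real.logb_pow, Real.logb_pow,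
        Real.logb_mul (by norm_num) (ne_of_gt hr0)]
    have h22 : Real.logb 2 2 = 1 := by simp
    rw [h22]
  have hlogr : Real.logb 2 r = Real.logb 2 ((k:ℝ) / (n * δ)) / 2 := by
    rw [hr, Real.logb, Real.logb, Real.log_sqrt (by positivity)]
    ring
  have hlogk : 0 ≤ Real.logb 2 (k:ℝ) := Real.logb_nonneg one_lt_two (by exact_mod_cast hk)
  rw [hlogB, hlogr]
  ring_nf
  nlinarith [hlogk]
end
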